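/- arXiv:1803.02949 — 9 statements merged into one kernel-verified Lean document; each statement's English description precedes it below -/
import Mathlib

section
/- Let A be a complex (d+k)×(d+k) matrix with all diagonal entries equal to 1 and rank(A) ≤ d. Then the maximum absolute value of an off-diagonal entry of A is at least sqrt(k / (d(d+k-1))). -/
open Matrix

set_option maxHeartbeats 1000000 in
theorem stmt_0 (d k : ℕ) (hd : 0 < d) (hk : 0 < k)
    (A : Matrix (Fin (d + k)) (Fin (d + k)) ℂ)
    (hdiag : ∀ i, A i i = 1) (hrank : A.rank ≤ d) :
    ∃ i j, i ≠ j ∧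
      Real.sqrt ((k : ℝ) / ((d : ℝ) * ((d : ℝ) + (k : ℝ) - 1))) ≤ ‖A i j‖ := by
  classical
  set E := EuclideanSpace ℂ (Fin (d + k)) with hE
  set W : Submodule ℂ E := LinearMap.range (Matrix.toEuclideanLin A) with hW
  set g : E →ₗ[ℂ] E := ((W.subtypeL ∘L W.orthogonalProjection : E →L[ℂ] E) : E →ₗ[ℂ] E) with hg
  set b : Module.Basis (Fin (d + k)) ℂ E := PiLp.basisFun 2 ℂ (Fin (d + k)) with hb
  set P : Matrix (Fin (d + k)) (Fin (d + k)) ℂ := LinearMap.toMatrix b b g with hP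
  have hPg : Matrix.toEuclideanLin P = g := by
    rw [Matrix.toEuclideanLin_eq_toLin, hP, hb]
    exact Matrix.toLin_toMatrix _ _ g
  have hgmem : ∀ x : E, g x ∈ W := fun x => (W.orthogonalProjection x).2
  have hgW : ∀ x ∈ W, g x = x := fun x hx => Submodule.starProjection_eq_self_iff.mpr hx
  have hmul : ∀ M N : Matrix (Fin (d + k)) (Fin (d + k)) ℂ,
      Matrix.toEuclideanLin (M * N)
        = (Matrix.toEuclideanLin M).comp (Matrix.toEuclideanLin N) := by
    intro M N
    rw [Matrix.toEuclideanLin_eq_toLin]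
    exact Matrix.toLin_mul _ _ _ M N
  have hPA : P * A = A := by
    apply Matrix.toEuclideanLin.injective
    rw [hmul, hPg]
    refine LinearMap.ext fun x => ?_
    exact hgW _ ⟨x, rfl⟩
  have hadj : g = LinearMap.adjoint g := by
    rw [LinearMap.eq_adjoint_iff]
    intro x y
    exact Submodule.inner_starProjection_left_eq_right W x y
  have hPH : Pᴴ = P := by
    apply Matrix.toEuclideanLin.injective
    rw [Matrix.toEuclideanLin_conjTranspose_eq_adjoint, hPg, ← hadj]
  have hPP : P * P = P := by
    apply Matrix.toEuclideanLin.injective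
    rw [hmul, hPg]
    refine LinearMap.ext fun x => ?_
    exact hgW _ (hgmem x)
  have hproj : LinearMap.IsProj W g := ⟨hgmem, hgW⟩
  set r := Module.finrank ℂ W with hrdef
  have htr : Matrix.trace P = (r : ℂ) := by
    rw [hP, ← LinearMap.trace_eq_matrix_trace ℂ b g]
    exact hproj.trace
  have hrk : A.rank = r := Matrix.rank_eq_finrank_range_toLin A b b
  have hr : r ≤ d := hrk ▸ hrank
  -- frobenius inner products as traces
  have key : ∀ M N : Matrix (Fin (d + k)) (Fin (d + k)) ℂ,
      ∑ p : Fin (d + k) × Fin (d + k), (starRingEnd ℂ) (M p.1 p.2) * N p.1 p.2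
        = Matrix.trace (Mᴴ * N) := by
    intro M N
    rw [Matrix.trace]
    simp only [Matrix.diag_apply, Matrix.mul_apply, Matrix.conjTranspose_apply,
      Fintype.sum_prod_type]
    rw [Finset.sum_comm]
    rfl
  -- the vectors
  set x : EuclideanSpace ℂ (Fin (d + k) × Fin (d + k)) :=
    (WithLp.equiv 2 ((Fin (d + k) × Fin (d + k)) → ℂ)).symm (fun p => P p.1 p.2) with hx
  set y : EuclideanSpace ℂ (Fin (d + k) × Fin (d + k)) :=
    (WithLp.equiv 2 ((Fin (d + k) × Fin (d + k)) → ℂ)).symm (fun p => A p.1 p.2) with hy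
  have hinner : (inner ℂ x y : ℂ) = ((d + k : ℕ) : ℂ) := by
    rw [PiLp.inner_apply]
    simp only [RCLike.inner_apply']
    calc (∑ p : Fin (d + k) × Fin (d + k), (starRingEnd ℂ) (x p) * y p)
        = ∑ p : Fin (d + k) × Fin (d + k), (starRingEnd ℂ) (P p.1 p.2) * A p.1 p.2 := rfl
      _ = Matrix.trace (Pᴴ * A) := key P A
      _ = Matrix.trace A := by rw [hPH, hPA]
      _ = ((d + k : ℕ) : ℂ) := by
          rw [Matrix.trace]
          simp [Matrix.diag_apply, hdiag]
  set S : ℝ := ∑ p : Fin (d + k) × Fin (d + k), ‖A p.1 p.2‖ ^ 2 with hS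
  have hnormx : ‖x‖ ^ 2 = (r : ℝ) := by
    have h1 : (inner ℂ x x : ℂ) = (r : ℂ) := by
      rw [PiLp.inner_apply]
      simp only [RCLike.inner_apply']
      calc (∑ p : Fin (d + k) × Fin (d + k), (starRingEnd ℂ) (x p) * x p)
          = Matrix.trace (Pᴴ * P) := key P P
        _ = (r : ℂ) := by rw [hPH, hPP, htr]
    have h2 := inner_self_eq_norm_sq (𝕜 := ℂ) x
    rw [h1] at h2
    simpa using h2.symm
  have hnormy : ‖y‖ ^ 2 = S := by
    have h1 : (inner ℂ y y : ℂ) = (S : ℂ) := by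
      rw [PiLp.inner_apply]
      simp only [RCLike.inner_apply']
      calc (∑ p : Fin (d + k) × Fin (d + k), (starRingEnd ℂ) (y p) * y p)
          = ∑ p : Fin (d + k) × Fin (d + k), ((‖A p.1 p.2‖ ^ 2 : ℝ) : ℂ) := by
            refine Finset.sum_congr rfl fun p _ => ?_
            rw [Complex.sq_norm, Complex.normSq_eq_conj_mul_self]
            rfl
        _ = (S : ℂ) := by rw [hS]; push_cast; ring
    have h2 := inner_self_eq_norm_sq (𝕜 := ℂ) y
    rw [h1] at h2
    simpa using h2.symm
  -- Cauchy-Schwarz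
  have hcs : ((d + k : ℕ) : ℝ) ^ 2 ≤ (r : ℝ) * S := by
    have h := norm_inner_le_norm (𝕜 := ℂ) x y
    rw [hinner] at h
    have hn' : ‖((d + k : ℕ) : ℂ)‖ = ((d + k : ℕ) : ℝ) := RCLike.norm_natCast _
    rw [hn'] at h
    have h2 := mul_self_le_mul_self (by positivity) h
    calc ((d + k : ℕ) : ℝ) ^ 2 = ((d + k : ℕ) : ℝ) * ((d + k : ℕ) : ℝ) := by ring
      _ ≤ (‖x‖ * ‖y‖) * (‖x‖ * ‖y‖) := h2
      _ = ‖x‖ ^ 2 * ‖y‖ ^ 2 := by ring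
      _ = (r : ℝ) * S := by rw [hnormx, hnormy]
  have hS0 : 0 ≤ S := by
    rw [hS]
    positivity
  have hcs2 : ((d + k : ℕ) : ℝ) ^ 2 ≤ (d : ℝ) * S := by
    refine hcs.trans (mul_le_mul_of_nonneg_right ?_ hS0)
    exact_mod_cast hr
  -- pick the max off-diagonal entry
  have hne : (Finset.univ : Finset (Fin (d + k))).offDiag.Nonempty := by
    refine ⟨(⟨0, by omega⟩, ⟨1, by omega⟩),
      Finset.mem_offDiag.mpr ⟨Finset.mem_univ _, Finset.mem_univ _, ?_⟩⟩
    simp [Fin.ext_iff]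
  obtain ⟨q, hq, hmax⟩ := Finset.exists_max_image
    (Finset.univ : Finset (Fin (d + k))).offDiag
    (fun p => ‖A p.1 p.2‖) hne
  obtain ⟨-, -, hqne⟩ := Finset.mem_offDiag.mp hq
  refine ⟨q.1, q.2, hqne, ?_⟩
  set m := ‖A q.1 q.2‖ with hm
  have hm0 : 0 ≤ m := norm_nonneg _
  -- bound S
  have hdiagset : (Finset.univ : Finset (Fin (d + k) × Fin (d + k))).filter (fun p => p.1 = p.2)
      = (Finset.univ : Finset (Fin (d + k))).diag := by
    ext p
    simp [Finset.mem_diag]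
  have hoffset : (Finset.univ : Finset (Fin (d + k) × Fin (d + k))).filter (fun p => ¬ p.1 = p.2)
      = (Finset.univ : Finset (Fin (d + k))).offDiag := by
    ext p
    simp [Finset.mem_offDiag]
  have hsplit := Finset.sum_filter_add_sum_filter_not
    (Finset.univ : Finset (Fin (d + k) × Fin (d + k)))
    (fun p => p.1 = p.2) (fun p => ‖A p.1 p.2‖ ^ 2)
  have hdsum : ∑ p ∈ (Finset.univ : Finset (Fin (d + k) × Fin (d + k))).filter
      (fun p => p.1 = p.2), ‖A p.1 p.2‖ ^ 2 = ((d + k : ℕ) : ℝ) := by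
    rw [hdiagset]
    have hone : ∀ p ∈ (Finset.univ : Finset (Fin (d + k))).diag,
        ‖A p.1 p.2‖ ^ 2 = 1 := by
      intro p hp
      have h12 : p.1 = p.2 := (Finset.mem_diag.mp hp).2
      have hA1 : A p.1 p.2 = 1 := by rw [← h12]; exact hdiag p.1
      rw [hA1]
      simp
    rw [Finset.sum_congr rfl hone, Finset.sum_const, Finset.diag_card]
    simp
  have hosum : ∑ p ∈ (Finset.univ : Finset (Fin (d + k) × Fin (d + k))).filter
      (fun p => ¬ p.1 = p.2), ‖A p.1 p.2‖ ^ 2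
      ≤ (((d + k) * (d + k) - (d + k) : ℕ) : ℝ) * m ^ 2 := by
    rw [hoffset]
    have hcard : (Finset.univ : Finset (Fin (d + k))).offDiag.card
        = (d + k) * (d + k) - (d + k) := by
      rw [Finset.offDiag_card]
      simp
    calc ∑ p ∈ (Finset.univ : Finset (Fin (d + k))).offDiag, ‖A p.1 p.2‖ ^ 2
        ≤ (Finset.univ : Finset (Fin (d + k))).offDiag.card • (m ^ 2) := by
          refine Finset.sum_le_card_nsmul _ _ _ fun p hp => ?_
          exact pow_le_pow_left₀ (norm_nonneg _) (hmax p hp) 2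
      _ = (((d + k) * (d + k) - (d + k) : ℕ) : ℝ) * m ^ 2 := by rw [hcard, nsmul_eq_mul]
  have hSbound : S ≤ ((d + k : ℕ) : ℝ) + (((d + k) * (d + k) - (d + k) : ℕ) : ℝ) * m ^ 2 := by
    rw [hS, ← hsplit, hdsum]
    exact add_le_add_right hosum _
  -- final arithmetic
  have hcast : (((d + k) * (d + k) - (d + k) : ℕ) : ℝ)
      = ((d + k : ℕ) : ℝ) * ((d + k : ℕ) : ℝ) - ((d + k : ℕ) : ℝ) := by
    have hle : d + k ≤ (d + k) * (d + k) := Nat.le_mul_of_pos_left (d + k) (by omega)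
    push_cast [Nat.cast_sub hle]
    ring
  have hfinal : (k : ℝ) / ((d : ℝ) * ((d : ℝ) + (k : ℝ) - 1)) ≤ m ^ 2 := by
    have hN : ((d + k : ℕ) : ℝ) = (d : ℝ) + (k : ℝ) := by push_cast; ring
    have hd1 : (1 : ℝ) ≤ (d : ℝ) := by exact_mod_cast hd
    have hk1 : (1 : ℝ) ≤ (k : ℝ) := by exact_mod_cast hk
    have hmain : ((d + k : ℕ) : ℝ) ^ 2 ≤ (d : ℝ) * (((d + k : ℕ) : ℝ)
        + (((d + k : ℕ) : ℝ) * ((d + k : ℕ) : ℝ) - ((d + k : ℕ) : ℝ)) * m ^ 2) := by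
      calc ((d + k : ℕ) : ℝ) ^ 2 ≤ (d : ℝ) * S := hcs2
        _ ≤ _ := by
            rw [← hcast]
            exact mul_le_mul_of_nonneg_left hSbound (by positivity)
    rw [hN] at hmain
    have hpos : 0 < (d : ℝ) * ((d : ℝ) + (k : ℝ) - 1) := by nlinarith
    rw [div_le_iff₀ hpos]
    nlinarith [hmain, sq_nonneg m, mul_nonneg (mul_nonneg (sq_nonneg m) (by linarith : (0:ℝ) ≤ (d:ℝ))) (by linarith : (0:ℝ) ≤ (k:ℝ))]
  calc Real.sqrt ((k : ℝ) / ((d : ℝ) * ((d : ℝ) + (k : ℝ) - 1)))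
      ≤ Real.sqrt (m ^ 2) := Real.sqrt_le_sqrt hfinal
    _ = m := Real.sqrt_sq hm0
end

section
/- For any square complex matrix A of rank r ≥ 1, tr(A*A) ≥ |tr(A)|² / r, where A* denotes the conjugate transpose. -/
open Matrix

-- Sum of squared abs of entries equals re of trace of Bᴴ*B
lemma aux_trace_conj {n : ℕ} (B : Matrix (Fin n) (Fin n) ℂ) :
    ∑ p : Fin n × Fin n, ‖B p.2 p.1‖ ^ 2 = ((Bᴴ * B).trace).re := by
  rw [Fintype.sum_prod_type]
  simp only [Matrix.trace, Matrix.diag, Matrix.mul_apply, Matrix.conjTranspose_apply,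
    Complex.re_sum]
  congr 1
  ext i
  congr 1
  ext j
  rw [Complex.sq_norm]
  simp only [Complex.mul_re, Complex.star_def, Complex.conj_re, Complex.conj_im,
    Complex.normSq_apply]
  ring

theorem stmt_1 {n : ℕ} (A : Matrix (Fin n) (Fin n) ℂ) (hr : 1 ≤ A.rank) :
    ‖A.trace‖ ^ 2 / (A.rank : ℝ) ≤ ((Aᴴ * A).trace).re := by
  classical
  set E := EuclideanSpace ℂ (Fin n)
  set T : E →ₗ[ℂ] E := Matrix.toEuclideanLin A with hT
  set U : Submodule ℂ E := LinearMap.range T with hU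
  set pL : E →ₗ[ℂ] E := U.subtype ∘ₗ (U.orthogonalProjectionOnto).toLinearMap with hpL
  set P : Matrix (Fin n) (Fin n) ℂ := Matrix.toEuclideanLin.symm pL with hP
  have hPl : Matrix.toEuclideanLin P = pL := Matrix.toEuclideanLin.apply_symm_apply pL
  have hfix : ∀ x ∈ U, pL x = x := fun x hx => by
    simp [hpL, Submodule.starProjection_eq_self_iff.2 hx]
  -- P * A = A
  have hPA : P * A = A := by
    apply Matrix.toEuclideanLin.injective
    rw [Matrix.toEuclideanLin_eq_toLin, Matrix.toLin_mul _ (PiLp.basisFun 2 ℂ (Fin n)) _,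
      ← Matrix.toEuclideanLin_eq_toLin, hPl]
    exact LinearMap.ext fun x => hfix _ (LinearMap.mem_range_self T x)
  -- P Hermitian
  have hHerm : Pᴴ = P := by
    have : P.IsHermitian := by
      rw [Matrix.isHermitian_iff_isSymmetric, hPl]
      intro x y
      simpa [hpL] using Submodule.inner_starProjection_left_eq_right U x y
    exact this
  -- P idempotent
  have hPP : P * P = P := by
    apply Matrix.toEuclideanLin.injective
    rw [Matrix.toEuclideanLin_eq_toLin, Matrix.toLin_mul _ (PiLp.basisFun 2 ℂ (Fin n)) _,
      ← Matrix.toEuclideanLin_eq_toLin, hPl]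
    exact LinearMap.ext fun x => hfix _ (Submodule.coe_mem (U.orthogonalProjectionOnto x))
  -- trace P = rank A
  have hrank : A.rank = Module.finrank ℂ U := by
    rw [hU, hT, Matrix.toEuclideanLin_eq_toLin]
    exact Matrix.rank_eq_finrank_range_toLin A _ _
  have hproj : LinearMap.IsProj U pL :=
    ⟨fun x => by simp [hpL], hfix⟩
  have htrP : P.trace = (A.rank : ℂ) := by
    have := LinearMap.trace_eq_matrix_trace ℂ (PiLp.basisFun 2 ℂ (Fin n)) pL
    have hPm : LinearMap.toMatrix (PiLp.basisFun 2 ℂ (Fin n)) (PiLp.basisFun 2 ℂ (Fin n)) pL = P := by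
      rw [hP]
      rfl
    rw [hPm] at this
    rw [← this, hproj.trace, hrank]
  -- Cauchy-Schwarz
  have h1 : A.trace = ∑ p : Fin n × Fin n, P p.1 p.2 * A p.2 p.1 := by
    conv_lhs => rw [← hPA]
    rw [Fintype.sum_prod_type]
    simp [Matrix.trace, Matrix.diag, Matrix.mul_apply]
  have hsumP : ∑ p : Fin n × Fin n, ‖P p.1 p.2‖ ^ 2 = (A.rank : ℝ) := by
    rw [Fintype.sum_equiv (Equiv.prodComm (Fin n) (Fin n))
      (fun p => ‖P p.1 p.2‖ ^ 2) (fun p => ‖P p.2 p.1‖ ^ 2)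
      (fun p => rfl), aux_trace_conj P, hHerm, hPP, htrP]
    simp
  have hsumA : ∑ p : Fin n × Fin n, ‖A p.2 p.1‖ ^ 2 = ((Aᴴ * A).trace).re :=
    aux_trace_conj A
  have hCS : ‖A.trace‖ ^ 2 ≤ (A.rank : ℝ) * ((Aᴴ * A).trace).re := by
    rw [← hsumP, ← hsumA]
    calc ‖A.trace‖ ^ 2
        ≤ (∑ p : Fin n × Fin n, ‖P p.1 p.2‖ * ‖A p.2 p.1‖) ^ 2 := by
          apply pow_le_pow_left₀ (norm_nonneg _)
          rw [h1]
          exact (norm_sum_le _ _).trans_eq (Finset.sum_congr rfl fun p _ => norm_mul _ _)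
      _ ≤ _ := Finset.sum_mul_sq_le_sq_mul_sq _ _ _
  have hrpos : (0 : ℝ) < (A.rank : ℝ) := by exact_mod_cast hr
  rw [div_le_iff₀ hrpos]
  linarith [hCS]
end

section
/- For every positive integer d, the minimum over all sets of d+1 unit vectors in ℝ^d of the maximum absolute inner product between distinct vectors equals 1/d. -/
open scoped RealInnerProductSpace



lemma swap4 {α β γ δ : Type*} [Fintype α] [Fintype β] [Fintype γ] [Fintype δ]
    (f : α → β → γ → δ → ℝ) :
    ∑ a, ∑ b, ∑ i, ∑ j, f a b i j = ∑ i, ∑ j, ∑ a, ∑ b, f a b i j := by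
  calc ∑ a, ∑ b, ∑ i, ∑ j, f a b i j
      = ∑ a, ∑ i, ∑ b, ∑ j, f a b i j :=
        Finset.sum_congr rfl fun a _ => Finset.sum_comm
    _ = ∑ i, ∑ a, ∑ b, ∑ j, f a b i j := Finset.sum_comm
    _ = ∑ i, ∑ a, ∑ j, ∑ b, f a b i j :=
        Finset.sum_congr rfl fun i _ => Finset.sum_congr rfl fun a _ => Finset.sum_comm
    _ = ∑ i, ∑ j, ∑ a, ∑ b, f a b i j :=
        Finset.sum_congr rfl fun i _ => Finset.sum_comm

lemma lower_bound (d : ℕ) (hd : 0 < d) (x : Fin (d + 1) → EuclideanSpace ℝ (Fin d))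
    (hx : ∀ i, ‖x i‖ = 1) : ∃ i j, i ≠ j ∧ 1 / (d : ℝ) ≤ |⟪x i, x j⟫| := by
  by_contra hcon
  push_neg at hcon
  set M : Fin d → Fin d → ℝ := fun a b => ∑ i, x i a * x i b with hM
  have hinner : ∀ i j, ⟪x i, x j⟫ = ∑ a, x i a * x j a := by
    intro i j
    simp [PiLp.inner_apply, RCLike.inner_apply, conj_trivial]
    exact Finset.sum_congr rfl fun _ _ => mul_comm _ _
  -- trace
  have htr : ∑ a, M a a = (d : ℝ) + 1 := by
    have : ∑ a, M a a = ∑ i : Fin (d+1), ⟪x i, x i⟫ := by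
      rw [Finset.sum_comm (f := fun a i => x i a * x i a)]
      exact Finset.sum_congr rfl fun i _ => (hinner i i).symm
    rw [this]
    have : ∀ i, ⟪x i, x i⟫ = (1:ℝ) := by
      intro i
      rw [real_inner_self_eq_norm_sq, hx i]; norm_num
    simp [this, hx]
  -- sum of squares identity
  have hsq : ∑ a, ∑ b, (M a b)^2 = ∑ i, ∑ j, ⟪x i, x j⟫^2 := by
    have h1 : ∀ a b, (M a b)^2 = ∑ i, ∑ j, (x i a * x i b) * (x j a * x j b) := by
      intro a b
      rw [hM, sq, Finset.sum_mul_sum]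
    have h2 : ∀ i j, ⟪x i, x j⟫^2 = ∑ a, ∑ b, (x i a * x j a) * (x i b * x j b) := by
      intro i j
      rw [hinner, sq, Finset.sum_mul_sum]
    calc ∑ a, ∑ b, (M a b)^2 = ∑ a, ∑ b, ∑ i, ∑ j, (x i a * x i b) * (x j a * x j b) := by
          simp only [h1]
      _ = ∑ i, ∑ j, ∑ a, ∑ b, (x i a * x j a) * (x i b * x j b) := by
          rw [swap4 (fun a b i j => (x i a * x i b) * (x j a * x j b))]
          exact Finset.sum_congr rfl fun i _ => Finset.sum_congr rfl fun j _ =>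
            Finset.sum_congr rfl fun a _ => Finset.sum_congr rfl fun b _ => by ring
      _ = ∑ i, ∑ j, ⟪x i, x j⟫^2 := by simp only [h2]
  -- Cauchy-Schwarz on the diagonal
  have hcs : ((d:ℝ) + 1)^2 ≤ (d : ℝ) * ∑ a, ∑ b, (M a b)^2 := by
    have h1 : (∑ a, M a a * 1)^2 ≤ (∑ a, (M a a)^2) * ∑ a : Fin d, (1:ℝ)^2 :=
      Finset.sum_mul_sq_le_sq_mul_sq _ _ _
    simp only [mul_one, one_pow, Finset.sum_const, Finset.card_univ, Fintype.card_fin,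
      nsmul_eq_mul] at h1
    have h2 : ∑ a, (M a a)^2 ≤ ∑ a, ∑ b, (M a b)^2 := by
      apply Finset.sum_le_sum
      intro a _
      exact Finset.single_le_sum (f := fun b => (M a b)^2) (fun b _ => sq_nonneg _) (Finset.mem_univ a)
    calc ((d:ℝ)+1)^2 = (∑ a, M a a)^2 := by rw [htr]
      _ ≤ (∑ a, (M a a)^2) * d := h1
      _ ≤ (∑ a, ∑ b, (M a b)^2) * d := by
          apply mul_le_mul_of_nonneg_right h2 (by positivity)
      _ = (d:ℝ) * ∑ a, ∑ b, (M a b)^2 := mul_comm _ _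
  -- upper bound on T from hcon
  have hd' : (0:ℝ) < d := by exact_mod_cast hd
  have hT : ∑ i, ∑ j, ⟪x i, x j⟫^2 < ((d:ℝ)+1) + ((d:ℝ)+1)/d := by
    have hrow : ∀ i : Fin (d+1), ∑ j, ⟪x i, x j⟫^2 < 1 + 1/d := by
      intro i
      rw [← Finset.add_sum_erase _ _ (Finset.mem_univ i)]
      have hdiag : ⟪x i, x i⟫^2 = 1 := by
        rw [real_inner_self_eq_norm_sq, hx i]; norm_num
      rw [hdiag]
      have : ∑ j ∈ Finset.univ.erase i, ⟪x i, x j⟫^2 < 1/d := by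
        have hlt : ∀ j ∈ Finset.univ.erase i, ⟪x i, x j⟫^2 < 1/(d:ℝ)^2 := by
          intro j hj
          have hji : i ≠ j := (Finset.ne_of_mem_erase hj).symm
          have := hcon i j hji
          have habs : |⟪x i, x j⟫| < 1/d := this
          calc ⟪x i, x j⟫^2 = |⟪x i, x j⟫|^2 := (sq_abs _).symm
            _ < (1/d)^2 := by
                apply pow_lt_pow_left₀ habs (abs_nonneg _)
                norm_num
            _ = 1/(d:ℝ)^2 := by rw [div_pow]; norm_num
        calc ∑ j ∈ Finset.univ.erase i, ⟪x i, x j⟫^2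
            < ∑ j ∈ Finset.univ.erase i, 1/(d:ℝ)^2 := by
              apply Finset.sum_lt_sum_of_nonempty _ hlt
              rw [← Finset.card_pos, Finset.card_erase_of_mem (Finset.mem_univ i), Finset.card_univ]
              simp [hd]
          _ = (d:ℝ) * (1/(d:ℝ)^2) := by
              rw [Finset.sum_const, Finset.card_erase_of_mem (Finset.mem_univ i), Finset.card_univ]
              simp [nsmul_eq_mul]
          _ = 1/d := by field_simp
      linarith
    calc ∑ i, ∑ j, ⟪x i, x j⟫^2 < ∑ _i : Fin (d+1), (1 + 1/(d:ℝ)) := by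
          apply Finset.sum_lt_sum_of_nonempty Finset.univ_nonempty (fun i _ => hrow i)
      _ = ((d:ℝ)+1) * (1 + 1/d) := by
          rw [Finset.sum_const, Finset.card_univ, Fintype.card_fin, nsmul_eq_mul]; push_cast; ring
      _ = ((d:ℝ)+1) + ((d:ℝ)+1)/d := by field_simp
  have hlow : ((d:ℝ)+1) + ((d:ℝ)+1)/d ≤ ∑ i, ∑ j, ⟪x i, x j⟫^2 := by
    have heq : ((d:ℝ)+1) + ((d:ℝ)+1)/d = ((d:ℝ)+1)^2/d := by field_simp
    rw [← hsq, heq, div_le_iff₀ hd']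
    nlinarith [hcs]
  linarith


lemma upper_bound (d : ℕ) (hd : 0 < d) :
    ∃ x : Fin (d + 1) → EuclideanSpace ℝ (Fin d),
      (∀ i, ‖x i‖ = 1) ∧ ∀ i j, i ≠ j → |⟪x i, x j⟫| ≤ 1 / (d : ℝ) := by
  have hd' : (0:ℝ) < d := by exact_mod_cast hd
  set c : ℝ := 1 / (d + 1) with hc
  have hd1 : ((d:ℝ) + 1) ≠ 0 := by positivity
  set v : EuclideanSpace ℝ (Fin (d+1)) := WithLp.toLp 2 (fun _ => c) with hv
  set u : Fin (d+1) → EuclideanSpace ℝ (Fin (d+1)) :=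
    fun i => EuclideanSpace.single i (1:ℝ) - v with hu
  have hvv : ⟪v, v⟫ = c := by
    simp only [hv, PiLp.inner_apply, RCLike.inner_apply, conj_trivial]
    rw [Finset.sum_const, Finset.card_univ, Fintype.card_fin, nsmul_eq_mul, hc]
    push_cast; field_simp
  have hsv : ∀ i : Fin (d+1), ⟪EuclideanSpace.single i (1:ℝ), v⟫ = c := by
    intro i; rw [EuclideanSpace.inner_single_left]; simp [hv]
  have hvs : ∀ i : Fin (d+1), ⟪v, EuclideanSpace.single i (1:ℝ)⟫ = c := by
    intro i; rw [EuclideanSpace.inner_single_right]; simp [hv]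
  have hss : ∀ i j : Fin (d+1), ⟪EuclideanSpace.single i (1:ℝ), EuclideanSpace.single j (1:ℝ)⟫
      = if i = j then (1:ℝ) else 0 := by
    intro i j
    rw [EuclideanSpace.inner_single_left]
    simp [EuclideanSpace.single_apply, eq_comm]
  have key : ∀ i j, ⟪u i, u j⟫ = (if i = j then (1:ℝ) else 0) - c := by
    intro i j
    simp only [hu, inner_sub_left, inner_sub_right, hvv, hsv, hvs, hss]
    ring
  have hnorm : ∀ i, ‖u i‖^2 = 1 - c := by
    intro i
    rw [← real_inner_self_eq_norm_sq, key]
    simp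
  have hcpos : 0 < c := by rw [hc]; positivity
  have hclt : c < 1 := by
    rw [hc]; rw [div_lt_one (by positivity)]; linarith
  have hupos : ∀ i, ‖u i‖ ≠ 0 := by
    intro i h
    have := hnorm i
    rw [h] at this
    simp at this
    linarith
  -- the hyperplane orthogonal to v
  set W : Submodule ℝ (EuclideanSpace ℝ (Fin (d+1))) := (ℝ ∙ v)ᗮ with hW
  have humem : ∀ i, u i ∈ W := by
    intro i
    rw [hW, Submodule.mem_orthogonal_singleton_iff_inner_left]
    simp only [hu, inner_sub_left, inner_sub_right, hsv, hvs, hvv, sub_self]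
  have hWrank : Module.finrank ℝ W = d := by
    have hvne : v ≠ 0 := by
      intro h
      have : v 0 = 0 := by rw [h]; rfl
      rw [hv] at this
      exact absurd this (by simpa using ne_of_gt hcpos)
    have h1 : Module.finrank ℝ (ℝ ∙ v) = 1 := finrank_span_singleton hvne
    have h3 : Module.finrank ℝ (EuclideanSpace ℝ (Fin (d+1))) = d + 1 := by
      simp [finrank_euclideanSpace]
    have h2 := Submodule.finrank_add_finrank_orthogonal (K := ℝ ∙ v)
    rw [h1, h3] at h2
    rw [hW]
    omega
  -- isometry to ℝ^d
  let B := (stdOrthonormalBasis ℝ W).reindex (finCongr hWrank)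
  let f : W ≃ₗᵢ[ℝ] EuclideanSpace ℝ (Fin d) := B.repr
  set w : Fin (d+1) → W := fun i => (‖u i‖)⁻¹ • (⟨u i, humem i⟩ : W) with hw
  have hwcoe : ∀ i, ((w i : W) : EuclideanSpace ℝ (Fin (d+1))) = (‖u i‖)⁻¹ • u i := by
    intro i; simp [hw]
  refine ⟨fun i => f (w i), ?_, ?_⟩
  · intro i
    rw [f.norm_map, hw]
    rw [norm_smul, norm_inv, norm_norm]
    have : ‖(⟨u i, humem i⟩ : W)‖ = ‖u i‖ := rfl
    rw [this, inv_mul_cancel₀ (hupos i)]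
  · intro i j hij
    rw [f.inner_map_map, Submodule.coe_inner, hwcoe, hwcoe]
    have : ⟪((‖u i‖)⁻¹ • u i : EuclideanSpace ℝ (Fin (d+1))), (‖u j‖)⁻¹ • u j⟫
        = (‖u i‖)⁻¹ * ((‖u j‖)⁻¹ * ⟪u i, u j⟫) := by
      rw [real_inner_smul_left, real_inner_smul_right]
    rw [this, key i j, if_neg hij]
    have hni : ‖u i‖ = Real.sqrt (1 - c) := by
      rw [← hnorm i, Real.sqrt_sq (norm_nonneg _)]
    have hnj : ‖u j‖ = Real.sqrt (1 - c) := by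
      rw [← hnorm j, Real.sqrt_sq (norm_nonneg _)]
    rw [hni, hnj]
    have h1c : (0:ℝ) < 1 - c := by linarith
    have hs : Real.sqrt (1 - c) * Real.sqrt (1 - c) = 1 - c :=
      Real.mul_self_sqrt (le_of_lt h1c)
    have heval : (Real.sqrt (1-c))⁻¹ * ((Real.sqrt (1-c))⁻¹ * (0 - c)) = -(c / (1-c)) := by
      field_simp
      rw [Real.sq_sqrt h1c.le]; ring
    rw [heval, abs_neg, abs_of_pos (by positivity)]
    have : c / (1 - c) = 1 / d := by
      rw [hc]
      field_simp
      rw [add_sub_cancel_right]; exact div_self hd'.ne'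
    rw [this]

theorem stmt_3 (d : ℕ) (hd : 0 < d) :
    (∃ x : Fin (d + 1) → EuclideanSpace ℝ (Fin d),
      (∀ i, ‖x i‖ = 1) ∧ ∀ i j, i ≠ j → |⟪x i, x j⟫| ≤ 1 / (d : ℝ)) ∧
    (∀ x : Fin (d + 1) → EuclideanSpace ℝ (Fin d),
      (∀ i, ‖x i‖ = 1) → ∃ i j, i ≠ j ∧ 1 / (d : ℝ) ≤ |⟪x i, x j⟫|) := by
  exact ⟨upper_bound d hd, fun x hx => lower_bound d hd x hx⟩
end

section
/- Let C be an n×n Hermitian matrix over ℂ with C_{ii} = 1 and |C_{ij}| ≤ 1 for all i,j, whose largest eigenvalue λ has multiplicity k, and let d be a positive integer with d ≡ -k (mod n), say d = nb - k with b ≥ 1. Then the matrix A := (1+ε)I_{nb} - ε(C ⊗ J_b), where ε = 1/(bλ-1) and J_b is the b×b all-ones matrix, is Hermitian positive semidefinite of rank at most d, has all diagonal entries equal to 1, and all off-diagonal entries of absolute value at most ε = n/(λ(d+k) - n). -/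
open Matrix Module
open scoped Kronecker ComplexOrder

private lemma kron_conjTranspose {m l : Type*} (M : Matrix m m ℂ) (N : Matrix l l ℂ) :
    (M ⊗ₖ N)ᴴ = Mᴴ ⊗ₖ Nᴴ := by
  ext ⟨i, s⟩ ⟨j, t⟩
  simp [conjTranspose_apply, mul_comm]

private lemma kron_posSemidef {m l : Type*} [Fintype m] [Fintype l] [DecidableEq m]
    [DecidableEq l] {M : Matrix m m ℂ} {N : Matrix l l ℂ}
    (hM : M.PosSemidef) (hN : N.PosSemidef) : (M ⊗ₖ N).PosSemidef := by
  exact hM.kronecker hN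

private lemma posSemidef_of_eq_conjTranspose_mul_self {m : Type*} [Fintype m]
    {M : Matrix m m ℂ} (h : ∃ B : Matrix m m ℂ, M = Bᴴ * B) : M.PosSemidef := by
  obtain ⟨B, rfl⟩ := h
  exact posSemidef_conjTranspose_mul_self B

private lemma smul_posSemidef {m : Type*} [Fintype m] {M : Matrix m m ℂ}
    (hM : M.PosSemidef) {c : ℝ} (hc : 0 ≤ c) : (((c : ℂ)) • M).PosSemidef := by
  refine PosSemidef.of_dotProduct_mulVec_nonneg ?_ (fun x => ?_)
  · unfold Matrix.IsHermitian
    rw [conjTranspose_smul, hM.1.eq]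
    congr 1
    simp
  · rw [smul_mulVec, dotProduct_smul]
    have h0 : (0:ℂ) ≤ (c:ℂ) := by exact_mod_cast (Complex.zero_le_real).mpr hc
    calc (0:ℂ) = (c:ℂ) • 0 := by simp
    _ ≤ (c:ℂ) • (dotProduct (star x) (M *ᵥ x)) := by
        rw [smul_eq_mul, smul_eq_mul]
        exact mul_le_mul_of_nonneg_left (hM.dotProduct_mulVec_nonneg x) h0

private lemma shift_posSemidef {m : Type*} [Fintype m] [DecidableEq m]
    {C : Matrix m m ℂ} (hC : C.IsHermitian) {lam : ℝ}
    (hmax : ∀ i, hC.eigenvalues i ≤ lam) :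
    ((lam : ℂ) • 1 - C).PosSemidef := by
  have hU : (hC.eigenvectorUnitary : Matrix m m ℂ) * star (hC.eigenvectorUnitary : Matrix m m ℂ)
      = 1 := (Matrix.mem_unitaryGroup_iff).mp hC.eigenvectorUnitary.2
  have h2 : Matrix.diagonal (fun i => ((lam - hC.eigenvalues i : ℝ) : ℂ))
      = (lam:ℂ) • (1 : Matrix m m ℂ) - Matrix.diagonal (RCLike.ofReal ∘ hC.eigenvalues) := by
    ext i j
    by_cases h : i = j <;> simp [h, Matrix.one_apply, Matrix.diagonal_apply]
  have key : (lam:ℂ) • (1 : Matrix m m ℂ) - C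
      = (hC.eigenvectorUnitary : Matrix m m ℂ)
        * Matrix.diagonal (fun i => ((lam - hC.eigenvalues i : ℝ) : ℂ))
        * star (hC.eigenvectorUnitary : Matrix m m ℂ) := by
    rw [h2, Matrix.mul_sub, Matrix.sub_mul, mul_smul_comm, Matrix.mul_one,
        smul_mul_assoc, hU]
    conv_lhs => rw [hC.spectral_theorem, Unitary.conjStarAlgAut_apply]
  rw [key, Matrix.star_eq_conjTranspose]
  refine (posSemidef_diagonal_iff.mpr fun i => ?_).mul_mul_conjTranspose_same _
  rw [Complex.zero_le_real]
  linarith [hmax i]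

theorem stmt_9 (n k b d : ℕ) (hn : 0 < n) (hk : 0 < k) (hb : 1 ≤ b) (hd : 0 < d)
    (hdk : d + k = n * b)
    (C : Matrix (Fin n) (Fin n) ℂ) (hC : C.IsHermitian)
    (hdiag : ∀ i, C i i = 1) (hbd : ∀ i j, ‖C i j‖ ≤ 1)
    (lam : ℝ)
    (hmax : ∀ i, hC.eigenvalues i ≤ lam)
    (hmult : Fintype.card {i // hC.eigenvalues i = lam} = k)
    (eps : ℝ) (heps : eps = 1 / ((b : ℝ) * lam - 1))
    (A : Matrix (Fin n × Fin b) (Fin n × Fin b) ℂ)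
    (hA : A = ((1 + eps : ℝ) : ℂ) • (1 : Matrix (Fin n × Fin b) (Fin n × Fin b) ℂ)
        - ((eps : ℝ) : ℂ) • (C ⊗ₖ (Matrix.of fun _ _ => (1 : ℂ) : Matrix (Fin b) (Fin b) ℂ))) :
    A.IsHermitian ∧ A.PosSemidef ∧ A.rank ≤ d ∧
    (∀ p, A p p = 1) ∧
    (∀ p q, p ≠ q → ‖A p q‖ ≤ eps) ∧
    eps = (n : ℝ) / (lam * ((d : ℝ) + (k : ℝ)) - (n : ℝ)) := by
  classical
  -- ### scalar preliminaries
  have hUU : star (hC.eigenvectorUnitary : Matrix (Fin n) (Fin n) ℂ)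
      * (hC.eigenvectorUnitary : Matrix (Fin n) (Fin n) ℂ) = 1 :=
    (Matrix.mem_unitaryGroup_iff').mp hC.eigenvectorUnitary.2
  have htrC : C.trace = (n : ℂ) := by
    simp [Matrix.trace, Matrix.diag, hdiag]
  have htrD : C.trace = ∑ i, ((hC.eigenvalues i : ℂ)) := by
    conv_lhs => rw [hC.spectral_theorem, Unitary.conjStarAlgAut_apply]
    rw [Matrix.trace_mul_comm, ← Matrix.mul_assoc, hUU, Matrix.one_mul]
    simp [Matrix.trace, Matrix.diag]
  have htr : ∑ i, hC.eigenvalues i = n := by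
    have h3 : ((∑ i, hC.eigenvalues i : ℝ) : ℂ) = (n : ℂ) := by
      push_cast
      rw [← htrD, htrC]
    exact_mod_cast h3
  have hnR : (1:ℝ) ≤ (n:ℝ) := by exact_mod_cast hn
  have hlam1 : 1 ≤ lam := by
    have hle : (n:ℝ) ≤ (n:ℝ) * lam := by
      calc (n:ℝ) = ∑ i, hC.eigenvalues i := htr.symm
      _ ≤ ∑ _i : Fin n, lam := Finset.sum_le_sum fun i _ => hmax i
      _ = (n:ℝ) * lam := by simp [Finset.sum_const, nsmul_eq_mul]
    nlinarith
  have hblam : 1 < (b:ℝ) * lam := by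
    rcases lt_or_ge 1 b with h2 | h2
    · have : (2:ℝ) ≤ (b:ℝ) := by exact_mod_cast h2
      nlinarith
    · have hb1 : b = 1 := le_antisymm h2 hb
      subst hb1
      by_contra hcon
      push_neg at hcon
      have hlameq : lam = 1 := le_antisymm (by simpa using hcon) hlam1
      have hall : ∀ i, hC.eigenvalues i = lam := by
        intro i
        by_contra hne
        have hlt : hC.eigenvalues i < lam := lt_of_le_of_ne (hmax i) hne
        have hstrict : ∑ j, hC.eigenvalues j < ∑ _j : Fin n, lam :=
          Finset.sum_lt_sum (fun j _ => hmax j) ⟨i, Finset.mem_univ i, hlt⟩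
        rw [htr] at hstrict
        simp [hlameq, Finset.sum_const, nsmul_eq_mul] at hstrict
      have hkn : k = n := by
        rw [← hmult]
        rw [Fintype.card_congr (Equiv.subtypeUnivEquiv hall)]
        simp
      omega
  have hden : (0:ℝ) < (b:ℝ) * lam - 1 := by linarith
  have hepspos : 0 < eps := by rw [heps]; positivity
  have hkey : eps * ((b:ℝ) * lam) = 1 + eps := by
    rw [heps]; field_simp; ring
  have hkeyC : (eps:ℂ) * ((b:ℂ) * (lam:ℂ)) = 1 + (eps:ℂ) := by exact_mod_cast hkey
  -- ### positive semidefiniteness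
  set J : Matrix (Fin b) (Fin b) ℂ := Matrix.of fun _ _ => (1:ℂ) with hJdef
  have hJpsd : J.PosSemidef := by
    apply posSemidef_of_eq_conjTranspose_mul_self
    refine ⟨Matrix.of fun i _ => if i = (⟨0, hb⟩ : Fin b) then 1 else 0, ?_⟩
    ext i j
    simp [hJdef, Matrix.mul_apply, Matrix.conjTranspose_apply, apply_ite]
  have hKherm : ((b:ℂ) • (1 : Matrix (Fin b) (Fin b) ℂ) - J).IsHermitian := by
    unfold Matrix.IsHermitian
    ext i j
    by_cases h : i = j
    · simp [h, Matrix.one_apply, hJdef]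
    · simp only [Matrix.conjTranspose_apply, Matrix.sub_apply, Matrix.smul_apply,
        Matrix.one_apply, hJdef, Matrix.of_apply, if_neg h,
        if_neg (fun h' : j = i => absurd h'.symm h)]
      simp
  have hJJ : J * J = (b:ℂ) • J := by
    ext i j
    simp [hJdef, Matrix.mul_apply, Finset.sum_const]
  have hKmul : ((b:ℂ) • 1 - J) * ((b:ℂ) • 1 - J)
      = (b:ℂ) • ((b:ℂ) • (1 : Matrix (Fin b) (Fin b) ℂ) - J) := by
    rw [Matrix.sub_mul, Matrix.mul_sub, Matrix.mul_sub, hJJ, smul_mul_assoc, smul_mul_assoc,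
      Matrix.one_mul, mul_smul_comm, Matrix.mul_one]
    rw [Matrix.one_mul]
    module
  have hKpsd : ((b:ℂ) • (1 : Matrix (Fin b) (Fin b) ℂ) - J).PosSemidef := by
    apply posSemidef_of_eq_conjTranspose_mul_self
    have hbpos : (0:ℝ) < b := by exact_mod_cast hb
    set c : ℂ := (((Real.sqrt b)⁻¹ : ℝ) : ℂ) with hc
    have hcc : star c * c * (b:ℂ) = 1 := by
      have hr : ((Real.sqrt b)⁻¹ : ℝ) * ((Real.sqrt b)⁻¹ : ℝ) * (b:ℝ) = 1 := by
        rw [← mul_inv, Real.mul_self_sqrt hbpos.le]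
        field_simp
      rw [hc, RCLike.star_def, Complex.conj_ofReal, ← Complex.ofReal_natCast,
        ← Complex.ofReal_mul, ← Complex.ofReal_mul, hr, Complex.ofReal_one]
    refine ⟨c • ((b:ℂ) • 1 - J), ?_⟩
    rw [Matrix.conjTranspose_smul, hKherm.eq, smul_mul_assoc, mul_smul_comm, hKmul,
      smul_smul, smul_smul, hcc, one_smul]
  have hAeq : A = (eps:ℂ) • ((lam:ℂ) • ((1 : Matrix (Fin n) (Fin n) ℂ) ⊗ₖ ((b:ℂ) • 1 - J))
      + (((lam:ℂ) • 1 - C) ⊗ₖ J)) := by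
    rw [hA, hJdef]
    ext ⟨i, s⟩ ⟨j, t⟩
    by_cases hij : i = j <;> by_cases hst : s = t
    · simp [hij, hst, Matrix.one_apply, Prod.ext_iff, Matrix.smul_apply, Matrix.sub_apply]
      push_cast
      linear_combination -hkeyC
    · simp [hij, hst, Matrix.one_apply, Prod.ext_iff, Matrix.smul_apply, Matrix.sub_apply]
      try push_cast
      try ring
    · simp [hij, hst, Matrix.one_apply, Prod.ext_iff, Matrix.smul_apply, Matrix.sub_apply]
      try push_cast
      try ring
    · simp [hij, hst, Matrix.one_apply, Prod.ext_iff, Matrix.smul_apply, Matrix.sub_apply]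
      try push_cast
      try ring
  have hApsd : A.PosSemidef := by
    rw [hAeq]
    apply smul_posSemidef _ hepspos.le
    apply Matrix.PosSemidef.add
    · exact smul_posSemidef (kron_posSemidef Matrix.PosDef.one.posSemidef hKpsd)
        (by linarith : (0:ℝ) ≤ lam)
    · exact kron_posSemidef (shift_posSemidef hC hmax) hJpsd
  -- ### rank bound
  have hrank : A.rank ≤ d := by
    set T : (Fin n → ℂ) →ₗ[ℂ] (Fin n × Fin b → ℂ) := LinearMap.funLeft ℂ ℂ Prod.fst with hT
    have hTinj : Function.Injective T :=
      LinearMap.funLeft_injective_of_surjective ℂ ℂ _ (fun i => ⟨(i, ⟨0, hb⟩), rfl⟩)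
    set S := {i // hC.eigenvalues i = lam} with hS
    set w : S → (Fin n × Fin b → ℂ) := fun i => T (⇑(hC.eigenvectorBasis i.1)) with hw
    have hli0 : LinearIndependent ℂ (fun i : Fin n => ⇑(hC.eigenvectorBasis i)) := by
      have h1 := hC.eigenvectorBasis.toBasis.linearIndependent
      rw [hC.eigenvectorBasis.coe_toBasis] at h1
      have h2 := h1.map' (WithLp.linearEquiv 2 ℂ (Fin n → ℂ)).toLinearMap
        (LinearEquiv.ker _)
      exact h2
    have hli : LinearIndependent ℂ w := by
      apply LinearIndependent.map' _ T (LinearMap.ker_eq_bot.mpr hTinj)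
      exact hli0.comp Subtype.val Subtype.val_injective
    have hker : ∀ i : S, w i ∈ LinearMap.ker A.mulVecLin := by
      intro i
      rw [LinearMap.mem_ker, mulVecLin_apply]
      set v : Fin n → ℂ := ⇑(hC.eigenvectorBasis i.1) with hv
      have hCv : C *ᵥ v = fun j => (lam:ℂ) * v j := by
        have h := hC.mulVec_eigenvectorBasis i.1
        rw [i.2] at h
        funext j
        rw [← hv] at h
        rw [h]
        simp [Complex.real_smul]
      have hwv : w i = fun p => v p.1 := rfl
      funext p
      obtain ⟨j, s⟩ := p
      rw [hA, Matrix.sub_mulVec, Matrix.smul_mulVec, Matrix.smul_mulVec,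
        Matrix.one_mulVec]
      have hJv : ((C ⊗ₖ (Matrix.of fun _ _ => (1 : ℂ) : Matrix (Fin b) (Fin b) ℂ)) *ᵥ
          (fun p : Fin n × Fin b => v p.1)) (j, s) = (b:ℂ) * ((lam:ℂ) * v j) := by
        simp only [Matrix.mulVec, dotProduct, Fintype.sum_prod_type, kroneckerMap_apply,
          Matrix.of_apply, mul_one]
        rw [show ∀ f : Fin n → ℂ, ∑ x : Fin n, ∑ _y : Fin b, f x = ∑ x, (b:ℂ) * f x from
          fun f => by simp [Finset.sum_const, mul_comm]]
        rw [← Finset.mul_sum]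
        congr 1
        have := congrFun hCv j
        simpa [Matrix.mulVec, dotProduct] using this
      rw [← hJdef] at hJv
      simp only [Pi.sub_apply, Pi.smul_apply, hJv, hwv, Pi.zero_apply, smul_eq_mul]
      push_cast
      linear_combination (-v j) * hkeyC
    have hspan : Submodule.span ℂ (Set.range w) ≤ LinearMap.ker A.mulVecLin :=
      Submodule.span_le.mpr (by rintro _ ⟨i, rfl⟩; exact hker i)
    have h1 : k ≤ finrank ℂ (LinearMap.ker A.mulVecLin) := by
      calc k = Fintype.card S := hmult.symm
      _ = finrank ℂ (Submodule.span ℂ (Set.range w)) := (finrank_span_eq_card hli).symm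
      _ ≤ finrank ℂ (LinearMap.ker A.mulVecLin) := Submodule.finrank_mono hspan
    have h2 := LinearMap.finrank_range_add_finrank_ker A.mulVecLin
    rw [Module.finrank_fintype_fun_eq_card] at h2
    simp only [Fintype.card_prod, Fintype.card_fin] at h2
    have h3 : A.rank = finrank ℂ (LinearMap.range A.mulVecLin) := rfl
    omega
  -- ### entry facts
  have hdiagA : ∀ p, A p p = 1 := by
    intro p
    obtain ⟨i, s⟩ := p
    rw [hA]
    simp [Matrix.one_apply, hdiag i, Matrix.smul_apply, Matrix.sub_apply, hJdef]
    try push_cast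
    try ring
  have hoff : ∀ p q, p ≠ q → ‖A p q‖ ≤ eps := by
    intro p q hpq
    have hApq : A p q = -((eps:ℂ) * C p.1 q.1) := by
      rw [hA]
      simp [hJdef, Matrix.sub_apply, Matrix.smul_apply, Matrix.one_apply_ne hpq]
    rw [hApq, norm_neg]
    rw [norm_mul, Complex.norm_real, Real.norm_eq_abs, abs_of_pos hepspos]
    calc eps * ‖C p.1 q.1‖ ≤ eps * 1 :=
          mul_le_mul_of_nonneg_left (hbd p.1 q.1) hepspos.le
    _ = eps := mul_one eps
  have hlast : eps = (n : ℝ) / (lam * ((d : ℝ) + (k : ℝ)) - (n : ℝ)) := by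
    have hdk' : ((d:ℝ) + (k:ℝ)) = (n:ℝ) * (b:ℝ) := by exact_mod_cast hdk
    rw [heps, hdk']
    have hn0 : (n:ℝ) ≠ 0 := by positivity
    rw [show lam * ((n:ℝ) * b) - n = (n:ℝ) * ((b:ℝ) * lam - 1) from by ring]
    rw [mul_comm ((n:ℝ)) _]
    rw [eq_div_iff (by positivity)]
    field_simp
  exact ⟨hApsd.1, hApsd, hrank, hdiagA, hoff, hlast⟩
end

section
/- Let B_1, ..., B_ℓ be mutually unbiased bases of ℂ^k and set C = √k(A^*A - I_{kℓ}) + I_{kℓ} where A = [B_1|...|B_ℓ]. Then C is Hermitian with all diagonal entries 1 and all entries of absolute value at most 1, and its largest eigenvalue is √k(ℓ-1)+1 with multiplicity k. -/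
open Matrix

theorem stmt_11 (k l : ℕ) (hk : 0 < k) (hl : 0 < l)
    (B : Fin l → Matrix (Fin k) (Fin k) ℂ)
    (horth : ∀ i, (B i)ᴴ * B i = 1)
    (hunb : ∀ i j, i ≠ j → ∀ a b, ‖((B i)ᴴ * B j) a b‖ = 1 / Real.sqrt k)
    (A : Matrix (Fin k) (Fin l × Fin k) ℂ)
    (hA : A = Matrix.of fun a p => B p.1 a p.2)
    (C : Matrix (Fin l × Fin k) (Fin l × Fin k) ℂ)
    (hC : C = ((Real.sqrt k : ℝ) : ℂ) • (Aᴴ * A - 1) + 1) :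
    (∀ p, C p p = 1) ∧ (∀ p q, ‖C p q‖ ≤ 1) ∧
    ∃ hherm : C.IsHermitian,
      (∀ i, hherm.eigenvalues i ≤ Real.sqrt k * ((l : ℝ) - 1) + 1) ∧
      Fintype.card {i // hherm.eigenvalues i = Real.sqrt k * ((l : ℝ) - 1) + 1} = k := by
  classical
  have hk' : (0:ℝ) < Real.sqrt k := Real.sqrt_pos.mpr (by positivity)
  -- entry formula for Aᴴ * A
  have hM : ∀ p q : Fin l × Fin k, (Aᴴ * A) p q = ((B p.1)ᴴ * B q.1) p.2 q.2 := by
    intro p q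
    subst hA
    simp [Matrix.mul_apply, conjTranspose_apply]
  -- A * Aᴴ = l • 1
  have hBB : ∀ i, B i * (B i)ᴴ = 1 := fun i => mul_eq_one_comm.mp (horth i)
  have hAAH : A * Aᴴ = (l:ℂ) • 1 := by
    ext a b
    rw [hA]
    calc ∑ p : Fin l × Fin k, (Matrix.of fun a p => B p.1 a p.2) a p *
          star ((Matrix.of fun a p => B p.1 a p.2) b p)
        = ∑ i : Fin l, (B i * (B i)ᴴ) a b := by
          rw [Fintype.sum_prod_type]
          exact Finset.sum_congr rfl fun i _ => by
            simp [Matrix.mul_apply, conjTranspose_apply]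
      _ = ((l:ℂ) • (1 : Matrix (Fin k) (Fin k) ℂ)) a b := by
          simp [hBB, Finset.sum_const]
  -- (AᴴA)² = l • (AᴴA)
  have hM2 : (Aᴴ * A) * (Aᴴ * A) = (l:ℂ) • (Aᴴ * A) := by
    rw [Matrix.mul_assoc, ← Matrix.mul_assoc A Aᴴ A, hAAH, Matrix.smul_mul, Matrix.one_mul,
      Matrix.mul_smul]
  -- diagonal entries
  have hdiag : ∀ p, C p p = 1 := by
    intro p
    have h1 : (Aᴴ * A) p p = 1 := by rw [hM p p, horth p.1, one_apply_eq]
    rw [hC]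
    simp [Matrix.add_apply, Matrix.smul_apply, Matrix.sub_apply, h1]
  refine ⟨hdiag, ?_, ?_⟩
  · -- bound on entries
    intro p q
    by_cases hpq : p = q
    · subst hpq; rw [hdiag p]; simp
    · have h1q : (1 : Matrix (Fin l × Fin k) (Fin l × Fin k) ℂ) p q = 0 := one_apply_ne hpq
      have hcpq : C p q = ((Real.sqrt k : ℝ) : ℂ) * (Aᴴ * A) p q := by
        rw [hC]
        simp [Matrix.add_apply, Matrix.smul_apply, Matrix.sub_apply, h1q]
      by_cases h11 : p.1 = q.1
      · have h22 : p.2 ≠ q.2 := fun h => hpq (Prod.ext h11 h)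
        have h0 : (Aᴴ * A) p q = 0 := by
          rw [hM p q, h11, horth q.1, one_apply_ne h22]
        rw [hcpq, h0, mul_zero]
        simp
      · rw [hcpq, norm_mul, hM p q, hunb p.1 q.1 h11 p.2 q.2]
        rw [Complex.norm_real, Real.norm_eq_abs, abs_of_pos hk']
        rw [mul_one_div, div_self hk'.ne']
  · -- Hermitian and eigenvalue claims
    have hherm : C.IsHermitian := by
      rw [hC]
      show _ᴴ = _
      simp [conjTranspose_add, conjTranspose_smul, conjTranspose_sub,
        (isHermitian_conjTranspose_mul_self A).eq, Complex.conj_ofReal]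
    refine ⟨hherm, ?_⟩
    set μ : ℝ := Real.sqrt k * ((l : ℝ) - 1) + 1 with hμ
    set ν : ℝ := 1 - Real.sqrt k with hν
    -- quadratic identity for C
    have key : C * C = ((μ + ν : ℝ) : ℂ) • C
        - ((μ * ν : ℝ) : ℂ) • (1 : Matrix (Fin l × Fin k) (Fin l × Fin k) ℂ) := by
      rw [hC, hμ, hν]
      simp only [smul_sub, add_mul, mul_add, sub_mul, mul_sub, Matrix.smul_mul, Matrix.mul_smul,
        one_mul, mul_one, smul_smul, hM2]
      push_cast
      module
    -- each eigenvalue is μ or ν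
    have heig : ∀ i, hherm.eigenvalues i = μ ∨ hherm.eigenvalues i = ν := by
      intro i
      set lam := hherm.eigenvalues i with hlam
      set v : (Fin l × Fin k) → ℂ := ⇑(hherm.eigenvectorBasis i) with hv
      have hv1 : C *ᵥ v = lam • v := hherm.mulVec_eigenvectorBasis i
      have hvne : v ≠ 0 := by
        have hne := hherm.eigenvectorBasis.orthonormal.ne_zero i
        intro h
        apply hne
        ext a
        exact congrFun h a
      obtain ⟨a, ha⟩ : ∃ a, v a ≠ 0 := Function.ne_iff.mp hvne
      have h2 : (C * C) *ᵥ v = (lam * lam) • v := by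
        rw [← mulVec_mulVec, hv1, mulVec_smul, hv1, smul_smul]
      have h3 : (C * C) *ᵥ v = ((μ + ν) * lam - μ * ν) • v := by
        rw [key, sub_mulVec, smul_mulVec, hv1, smul_mulVec, one_mulVec]
        ext b
        simp [Complex.real_smul]
        ring
      have h4 : ((lam * lam : ℝ) : ℂ) * v a = (((μ + ν) * lam - μ * ν : ℝ) : ℂ) * v a := by
        have hc := congrFun (h2.symm.trans h3) a
        simpa [Complex.real_smul] using hc
      have h5 : lam * lam = (μ + ν) * lam - μ * ν := by
        have := mul_right_cancel₀ ha h4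
        exact_mod_cast this
      have h6 : (lam - μ) * (lam - ν) = 0 := by linear_combination h5
      rcases mul_eq_zero.mp h6 with h | h
      · left; linarith
      · right; linarith
    have hνμ : ν ≤ μ := by
      have h1 : (1:ℝ) ≤ l := by exact_mod_cast hl
      rw [hμ, hν]
      nlinarith [hk']
    refine ⟨fun i => ?_, ?_⟩
    · rcases heig i with h | h
      · rw [h]
      · rw [h]; exact hνμ
    · -- multiplicity count via trace
      have htr : C.trace = ((k * l : ℕ) : ℂ) := by
        have htrM : (Aᴴ * A).trace = ((l : ℂ)) * k := by
          rw [Matrix.trace_mul_comm, hAAH, Matrix.trace_smul, Matrix.trace_one]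
          simp
        rw [hC, Matrix.trace_add, Matrix.trace_smul, Matrix.trace_sub, htrM, Matrix.trace_one]
        simp [Fintype.card_prod]
        ring
      have hsum : ∑ i, hherm.eigenvalues i = (k : ℝ) * l := by
        have hspec := hherm.spectral_theorem
        have h1 : C.trace = (diagonal (RCLike.ofReal ∘ hherm.eigenvalues) :
            Matrix (Fin l × Fin k) (Fin l × Fin k) ℂ).trace := by
          conv_lhs => rw [hspec]
          rw [Unitary.conjStarAlgAut_apply, trace_mul_cycle]
          rw [show (star (hherm.eigenvectorUnitary : Matrix (Fin l × Fin k) (Fin l × Fin k) ℂ)) *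
              (hherm.eigenvectorUnitary : Matrix (Fin l × Fin k) (Fin l × Fin k) ℂ) = 1 from
            Unitary.coe_star_mul_self _, Matrix.one_mul]
        rw [htr] at h1
        have h2 : ((k*l : ℕ) : ℂ) = ((∑ i, hherm.eigenvalues i : ℝ) : ℂ) := by
          rw [h1, trace_diagonal]
          push_cast
          rfl
        have h3 := Complex.ofReal_injective h2.symm
        rw [h3]; push_cast; ring
      -- counting
      rw [Fintype.card_subtype]
      set m := (Finset.univ.filter (fun i : Fin l × Fin k => hherm.eigenvalues i = μ)).card with hm
      set m' := (Finset.univ.filter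
        (fun i : Fin l × Fin k => ¬ hherm.eigenvalues i = μ)).card with hm'
      have hcard : m + m' = k * l := by
        rw [hm, hm', Finset.card_filter_add_card_filter_not]
        simp [Fintype.card_prod, mul_comm]
      have hsplit : (m : ℝ) * μ + (m' : ℝ) * ν = (k : ℝ) * l := by
        rw [← hsum, ← Finset.sum_filter_add_sum_filter_not Finset.univ
          (fun i => hherm.eigenvalues i = μ) hherm.eigenvalues]
        congr 1
        · rw [Finset.sum_congr rfl (fun i hi => (Finset.mem_filter.mp hi).2), Finset.sum_const,
            nsmul_eq_mul]
        · rw [Finset.sum_congr rfl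
            (fun i hi => ((heig i).resolve_left (Finset.mem_filter.mp hi).2)),
            Finset.sum_const, nsmul_eq_mul]
      have hc : (m : ℝ) + m' = (k : ℝ) * l := by exact_mod_cast congrArg (Nat.cast : ℕ → ℝ) hcard
      have hkey : (m : ℝ) * (μ - ν) = (k:ℝ) * l * (1 - ν) := by
        linear_combination hsplit - ν * hc
      have hs1 : μ - ν = Real.sqrt k * l := by rw [hμ, hν]; ring
      have hν1 : (1:ℝ) - ν = Real.sqrt k := by rw [hν]; ring
      rw [hs1, hν1] at hkey
      have hsl : Real.sqrt k * l ≠ 0 := by positivity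
      have hklr : (m : ℝ) = k := by
        have h2 : (m:ℝ) * (Real.sqrt k * l) = (k:ℝ) * (Real.sqrt k * l) := by
          linear_combination hkey
        exact mul_right_cancel₀ hsl h2
      exact_mod_cast hklr
end

section
/- Let μ be an isotropic probability measure on ℝ^k with finite support not containing 0, and suppose every point of the support is a unit vector. If for μ-almost every pair x, y one has |⟨x,y⟩| = 1 when x ∈ {y, -y} and |⟨x,y⟩| = β otherwise, and if E_{x,y∼μ}|⟨x,y⟩| = β + (1-β)/N, then the support of μ, viewed projectively (identifying ±x), consists of at least N distinct lines forming an equiangular system with common angle β, and μ(x)+μ(-x) = 1/N for each such line. -/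
open scoped RealInnerProductSpace
open Classical

private lemma pick_reps {V : Type*} [AddCommGroup V] [DecidableEq V] (S : Finset V) :
    ∃ T : Finset V, T ⊆ S ∧ (∀ z ∈ S, ∃ x ∈ T, z = x ∨ z = -x) ∧
      (∀ x ∈ T, ∀ y ∈ T, x ≠ y → y ≠ -x) := by
  induction S using Finset.strongInduction with
  | _ S ih =>
  rcases S.eq_empty_or_nonempty with rfl | ⟨x, hx⟩
  · exact ⟨∅, by simp, by simp, by simp⟩
  · have hss : (S.erase x).erase (-x) ⊂ S :=
      lt_of_le_of_lt (Finset.erase_subset _ _) (Finset.erase_ssubset hx)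
    obtain ⟨T', hT'sub, hcov, hpw⟩ := ih _ hss
    have hT'S : ∀ {z}, z ∈ T' → z ∈ (S.erase x).erase (-x) := fun h => hT'sub h
    refine ⟨insert x T', ?_, ?_, ?_⟩
    · exact Finset.insert_subset hx (hT'sub.trans ((Finset.erase_subset _ _).trans (Finset.erase_subset _ _)))
    · intro z hz
      by_cases h1 : z = x
      · exact ⟨x, Finset.mem_insert_self _ _, Or.inl h1⟩
      · by_cases h2 : z = -x
        · exact ⟨x, Finset.mem_insert_self _ _, Or.inr h2⟩
        · obtain ⟨w, hw, hwz⟩ := hcov z (by simp [Finset.mem_erase, h1, h2, hz])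
          exact ⟨w, Finset.mem_insert_of_mem hw, hwz⟩
    · intro a ha b hb hab
      rcases Finset.mem_insert.mp ha with rfl | ha'
      · rcases Finset.mem_insert.mp hb with rfl | hb'
        · exact absurd rfl hab
        · exact (Finset.mem_erase.mp (hT'S hb')).1
      · rcases Finset.mem_insert.mp hb with rfl | hb'
        · intro h
          have hax : a ≠ -b := (Finset.mem_erase.mp (hT'S ha')).1
          exact hax (by rw [h, neg_neg])
        · exact hpw a ha' b hb' hab

theorem stmt_13 (k N : ℕ) (hk : 0 < k) (hN : 0 < N) (β : ℝ) (hβ0 : 0 ≤ β) (hβ1 : β < 1)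
    (S : Finset (EuclideanSpace ℝ (Fin k)))
    (p : EuclideanSpace ℝ (Fin k) → ℝ)
    (hpos : ∀ x ∈ S, 0 < p x) (hsum : ∑ x ∈ S, p x = 1)
    (hiso : ∀ v : EuclideanSpace ℝ (Fin k),
      ∑ x ∈ S, p x * ⟪x, v⟫ ^ 2 = ‖v‖ ^ 2 / k)
    (h0 : (0 : EuclideanSpace ℝ (Fin k)) ∉ S)
    (hunit : ∀ x ∈ S, ‖x‖ = 1)
    (hpair : ∀ x ∈ S, ∀ y ∈ S,
      (x = y ∨ x = -y → |⟪x, y⟫| = 1) ∧ (x ≠ y ∧ x ≠ -y → |⟪x, y⟫| = β))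
    (hmean : ∑ x ∈ S, ∑ y ∈ S, p x * p y * |⟪x, y⟫| = β + (1 - β) / N) :
    ∃ T : Finset (EuclideanSpace ℝ (Fin k)),
      T ⊆ S ∧ N ≤ T.card ∧
      (∀ x ∈ T, ∀ y ∈ T, x ≠ y → y ≠ -x ∧ |⟪x, y⟫| = β) ∧
      (∀ z ∈ S, ∃ x ∈ T, z = x ∨ z = -x) ∧
      (∀ x ∈ T, (∑ z ∈ S.filter (fun z => z = x ∨ z = -x), p z) = 1 / N) := by
  classical
  have hNR : (0:ℝ) < N := by exact_mod_cast hN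
  have h1β : (0:ℝ) < 1 - β := by linarith
  have hβ2 : (0:ℝ) < 1 - β^2 := by nlinarith
  -- Step A: each projective class has the same mass
  have hQval : ∀ y ∈ S, (∑ z ∈ S.filter (fun z => z = y ∨ z = -y), p z) * (1 - β^2)
      = 1/k - β^2 := by
    intro y hy
    have hiso' := hiso y
    rw [hunit y hy, one_pow] at hiso'
    have hsplit := Finset.sum_filter_add_sum_filter_not S (fun z => z = y ∨ z = -y)
        (fun x => p x * ⟪x, y⟫ ^ 2)
    have hpsplit := Finset.sum_filter_add_sum_filter_not S (fun z => z = y ∨ z = -y) p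
    have h1 : ∑ x ∈ S.filter (fun z => z = y ∨ z = -y), p x * ⟪x, y⟫ ^ 2
        = ∑ z ∈ S.filter (fun z => z = y ∨ z = -y), p z := by
      apply Finset.sum_congr rfl
      intro x hxF
      obtain ⟨hxS, hc⟩ := Finset.mem_filter.mp hxF
      have h := (hpair x hxS y hy).1 hc
      rw [← sq_abs, h, one_pow, mul_one]
    have h2 : ∑ x ∈ S.filter (fun z => ¬(z = y ∨ z = -y)), p x * ⟪x, y⟫ ^ 2
        = (∑ x ∈ S.filter (fun z => ¬(z = y ∨ z = -y)), p x) * β^2 := by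
      rw [Finset.sum_mul]
      apply Finset.sum_congr rfl
      intro x hxF
      obtain ⟨hxS, hc⟩ := Finset.mem_filter.mp hxF
      push_neg at hc
      have h := (hpair x hxS y hy).2 hc
      rw [← sq_abs, h]
    rw [h1, h2, hiso'] at hsplit
    rw [hsum] at hpsplit
    linear_combination hsplit - β^2 * hpsplit
  -- S is nonempty
  have hSne : S.Nonempty := by
    rcases S.eq_empty_or_nonempty with rfl | h
    · simp at hsum
    · exact h
  obtain ⟨y₀, hy₀⟩ := hSne
  have hQconst : ∀ y ∈ S, (∑ z ∈ S.filter (fun z => z = y ∨ z = -y), p z)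
      = (∑ z ∈ S.filter (fun z => z = y₀ ∨ z = -y₀), p z) := by
    intro y hy
    have h1 := hQval y hy
    have h2 := hQval y₀ hy₀
    have := h1.trans h2.symm
    exact mul_right_cancel₀ (ne_of_gt hβ2) this
  -- Step B: compute the double sum
  have hinner : ∀ x ∈ S, ∑ y ∈ S, p x * p y * |⟪x, y⟫|
      = p x * ((∑ z ∈ S.filter (fun z => z = x ∨ z = -x), p z)
          + (1 - (∑ z ∈ S.filter (fun z => z = x ∨ z = -x), p z)) * β) := by
    intro x hx
    have hsplit := Finset.sum_filter_add_sum_filter_not S (fun z => z = x ∨ z = -x)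
        (fun y => p x * p y * |⟪x, y⟫|)
    have hpsplit := Finset.sum_filter_add_sum_filter_not S (fun z => z = x ∨ z = -x) p
    have h1 : ∑ y ∈ S.filter (fun z => z = x ∨ z = -x), p x * p y * |⟪x, y⟫|
        = p x * (∑ z ∈ S.filter (fun z => z = x ∨ z = -x), p z) := by
      rw [Finset.mul_sum]
      apply Finset.sum_congr rfl
      intro y hyF
      obtain ⟨hyS, hc⟩ := Finset.mem_filter.mp hyF
      have hc' : x = y ∨ x = -y := by
        rcases hc with h | h
        · exact Or.inl h.symm
        · exact Or.inr (by rw [h, neg_neg])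
      rw [(hpair x hx y hyS).1 hc', mul_one]
    have h2 : ∑ y ∈ S.filter (fun z => ¬(z = x ∨ z = -x)), p x * p y * |⟪x, y⟫|
        = p x * (∑ y ∈ S.filter (fun z => ¬(z = x ∨ z = -x)), p y) * β := by
      rw [Finset.mul_sum, Finset.sum_mul]
      apply Finset.sum_congr rfl
      intro y hyF
      obtain ⟨hyS, hc⟩ := Finset.mem_filter.mp hyF
      push_neg at hc
      have hc' : x ≠ y ∧ x ≠ -y := by
        constructor
        · exact fun h => hc.1 h.symm
        · intro h
          exact hc.2 (by rw [h, neg_neg])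
      rw [(hpair x hx y hyS).2 hc']
    rw [h1, h2] at hsplit
    rw [hsum] at hpsplit
    rw [← hsplit]
    linear_combination (p x * β) * hpsplit
  have hQN : ∀ y ∈ S, (∑ z ∈ S.filter (fun z => z = y ∨ z = -y), p z) = 1/N := by
    have hdouble : ∑ x ∈ S, ∑ y ∈ S, p x * p y * |⟪x, y⟫|
        = (∑ z ∈ S.filter (fun z => z = y₀ ∨ z = -y₀), p z)
          + (1 - (∑ z ∈ S.filter (fun z => z = y₀ ∨ z = -y₀), p z)) * β := by
      have : ∀ x ∈ S, ∑ y ∈ S, p x * p y * |⟪x, y⟫|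
          = p x * ((∑ z ∈ S.filter (fun z => z = y₀ ∨ z = -y₀), p z)
            + (1 - (∑ z ∈ S.filter (fun z => z = y₀ ∨ z = -y₀), p z)) * β) := by
        intro x hx
        rw [hinner x hx, hQconst x hx]
      rw [Finset.sum_congr rfl this, ← Finset.sum_mul, hsum, one_mul]
    rw [hdouble] at hmean
    have hQ0 : (∑ z ∈ S.filter (fun z => z = y₀ ∨ z = -y₀), p z) = 1/N := by
      have h : (∑ z ∈ S.filter (fun z => z = y₀ ∨ z = -y₀), p z) * (1 - β)
          = (1/N) * (1 - β) := by
        linear_combination hmean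
      exact mul_right_cancel₀ (ne_of_gt h1β) h
    intro y hy
    rw [hQconst y hy, hQ0]
  -- Step C: choose representatives
  obtain ⟨T, hTsub, hcov, hpw⟩ := pick_reps S
  have hdisj : (T : Set (EuclideanSpace ℝ (Fin k))).PairwiseDisjoint
      (fun x => S.filter (fun z => z = x ∨ z = -x)) := by
    intro x hx y hy hxy
    rw [Function.onFun, Finset.disjoint_left]
    intro z hzx hzy
    obtain ⟨_, h1⟩ := Finset.mem_filter.mp hzx
    obtain ⟨_, h2⟩ := Finset.mem_filter.mp hzy
    rcases h1 with h1 | h1 <;> rcases h2 with h2 | h2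
    · exact hxy (h1.symm.trans h2)
    · exact hpw x hx y hy hxy ((neg_eq_iff_eq_neg.mpr (h1.symm.trans h2)).symm)
    · exact hpw x hx y hy hxy (h2.symm.trans h1)
    · exact hxy (by have := h1.symm.trans h2; exact neg_injective this)
  have hbU : T.biUnion (fun x => S.filter (fun z => z = x ∨ z = -x)) = S := by
    apply Finset.Subset.antisymm
    · intro z hz
      obtain ⟨x, hx, hzx⟩ := Finset.mem_biUnion.mp hz
      exact (Finset.mem_filter.mp hzx).1
    · intro z hz
      obtain ⟨x, hx, h⟩ := hcov z hz
      exact Finset.mem_biUnion.mpr ⟨x, hx, Finset.mem_filter.mpr ⟨hz, h⟩⟩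
  have hsum1 : ∑ x ∈ T, (∑ z ∈ S.filter (fun z => z = x ∨ z = -x), p z) = 1 := by
    rw [← Finset.sum_biUnion hdisj, hbU, hsum]
  have hcT : (T.card : ℝ) * (1/N) = 1 := by
    have h : ∑ _x ∈ T, (1/(N:ℝ)) = 1 := by
      rw [← Finset.sum_congr rfl (fun x hx => hQN x (hTsub hx))]
      exact hsum1
    rwa [Finset.sum_const, nsmul_eq_mul] at h
  have hcardR : (T.card : ℝ) = N := by
    rw [mul_one_div, div_eq_one_iff_eq (ne_of_gt hNR)] at hcT
    exact hcT
  have hcard : T.card = N := by exact_mod_cast hcardR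
  refine ⟨T, hTsub, hcard.ge, ?_, hcov, fun x hx => hQN x (hTsub hx)⟩
  intro x hx y hy hxy
  refine ⟨hpw x hx y hy hxy, ?_⟩
  have hx' : x ≠ -y := by
    intro h
    exact hpw y hy x hx (Ne.symm hxy) h
  exact (hpair x (hTsub hx) y (hTsub hy)).2 ⟨hxy, hx'⟩
end

section
/- Let A ∈ ℂ^{(d+k)×(d+k)} have 1's on the diagonal, rank(A) ≤ d, and let y_1, ..., y_{d+k} ∈ ℂ^k be the rows of a rank-k matrix N with AN = 0. Then for every v ∈ ℂ^k and every index i with ⟨v, y_i⟩ ≠ 0: off(A) ≥ |⟨v,y_i⟩| / Σ_{j≠i} |⟨v,y_j⟩|, where off(A) = max_{i≠j}|A_{ij}|. -/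
open Matrix Finset

theorem stmt_14 (d k : ℕ) (hd : 0 < d) (hk : 0 < k)
    (A : Matrix (Fin (d + k)) (Fin (d + k)) ℂ)
    (hdiag : ∀ i, A i i = 1) (hrank : A.rank ≤ d)
    (N : Matrix (Fin (d + k)) (Fin k) ℂ) (hN : N.rank = k) (hAN : A * N = 0)
    (y : Fin (d + k) → EuclideanSpace ℂ (Fin k)) (hy : ∀ i a, y i a = N i a)
    (v : EuclideanSpace ℂ (Fin k)) (i : Fin (d + k))
    (hvi : (inner ℂ v (y i) : ℂ) ≠ 0) :
    ∃ a b, a ≠ b ∧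
      ‖(inner ℂ v (y i) : ℂ)‖ /
        (∑ j ∈ Finset.univ.erase i, ‖(inner ℂ v (y j) : ℂ)‖) ≤
      ‖A a b‖ := by
  classical
  set S := ∑ j ∈ Finset.univ.erase i, ‖(inner ℂ v (y j) : ℂ)‖ with hS
  have h0 : ∀ j, (inner ℂ v (y j) : ℂ) = ∑ a, (starRingEnd ℂ) (v a) * N j a := by
    intro j
    simp [PiLp.inner_apply, RCLike.inner_apply, hy, mul_comm]
  have key : ∑ j, A i j * (inner ℂ v (y j) : ℂ) = 0 := by
    have hAN' : ∀ a, ∑ j, A i j * N j a = 0 := by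
      intro a
      have := congrFun (congrFun hAN i) a
      simpa [Matrix.mul_apply] using this
    calc ∑ j, A i j * (inner ℂ v (y j) : ℂ)
        = ∑ j, ∑ a, (starRingEnd ℂ) (v a) * (A i j * N j a) := by
          simp_rw [h0, Finset.mul_sum]
          congr 1; funext j; congr 1; funext a; ring
      _ = ∑ a, (starRingEnd ℂ) (v a) * ∑ j, A i j * N j a := by
          rw [Finset.sum_comm]; simp_rw [Finset.mul_sum]
      _ = 0 := by simp [hAN']
  have hi : (inner ℂ v (y i) : ℂ) = -∑ j ∈ Finset.univ.erase i, A i j * (inner ℂ v (y j) : ℂ) := by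
    have h1 := Finset.add_sum_erase Finset.univ
      (fun j => A i j * (inner ℂ v (y j) : ℂ)) (Finset.mem_univ i)
    simp only [key, hdiag, one_mul] at h1
    exact eq_neg_of_add_eq_zero_left h1
  have hbound : ‖(inner ℂ v (y i) : ℂ)‖ ≤
      ∑ j ∈ Finset.univ.erase i, ‖A i j‖ * ‖(inner ℂ v (y j) : ℂ)‖ := by
    rw [hi, norm_neg]
    refine le_trans (norm_sum_le _ _) (le_of_eq ?_)
    exact Finset.sum_congr rfl fun j _ => norm_mul _ _
  have hSpos : 0 < S := by
    rcases (Finset.sum_nonneg fun j _ => norm_nonneg _ :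
        (0:ℝ) ≤ S).lt_or_eq with h | h
    · exact h
    · exfalso
      have hz : ∀ j ∈ Finset.univ.erase i, ‖(inner ℂ v (y j) : ℂ)‖ = 0 :=
        (Finset.sum_eq_zero_iff_of_nonneg fun j _ => norm_nonneg _).mp h.symm
      have : ‖(inner ℂ v (y i) : ℂ)‖ ≤ 0 := by
        refine hbound.trans (le_of_eq ?_)
        exact Finset.sum_eq_zero fun j hj => by rw [hz j hj, mul_zero]
      exact hvi (norm_eq_zero.mp (le_antisymm this (norm_nonneg _)))
  by_contra hcon
  push_neg at hcon
  set t := ‖(inner ℂ v (y i) : ℂ)‖ / S with ht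
  obtain ⟨j0, hj0, hj0pos⟩ : ∃ j0 ∈ Finset.univ.erase i,
      0 < ‖(inner ℂ v (y j0) : ℂ)‖ := by
    by_contra hall
    push_neg at hall
    have : S = 0 := Finset.sum_eq_zero fun j hj =>
      le_antisymm (hall j hj) (norm_nonneg _)
    linarith
  have hlt : ∑ j ∈ Finset.univ.erase i, ‖A i j‖ * ‖(inner ℂ v (y j) : ℂ)‖
      < ∑ j ∈ Finset.univ.erase i, t * ‖(inner ℂ v (y j) : ℂ)‖ := by
    refine Finset.sum_lt_sum (fun j hj => ?_) ⟨j0, hj0, ?_⟩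
    · exact mul_le_mul_of_nonneg_right
        (le_of_lt (hcon i j (Finset.ne_of_mem_erase hj).symm)) (norm_nonneg _)
    · exact mul_lt_mul_of_pos_right (hcon i j0 (Finset.ne_of_mem_erase hj0).symm) hj0pos
  have heq : ∑ j ∈ Finset.univ.erase i, t * ‖(inner ℂ v (y j) : ℂ)‖
      = ‖(inner ℂ v (y i) : ℂ)‖ := by
    rw [← Finset.mul_sum, ← hS, ht, div_mul_cancel₀ _ (ne_of_gt hSpos)]
  linarith [hbound]
end

section
/- For every probability measure μ on ℝ² that is the uniform distribution on a finite multiset of vectors spanning ℝ², there exist a nonzero vector v ∈ ℝ² and a point y in the support of μ such that E_{x∼μ}|⟨x, v⟩| ≤ (2/3)·|⟨y, v⟩|. -/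
open scoped RealInnerProductSpace

theorem stmt_16 (n : ℕ) (hn : 0 < n)
    (x : Fin n → EuclideanSpace ℝ (Fin 2))
    (hspan : Submodule.span ℝ (Set.range x) = ⊤) :
    ∃ v : EuclideanSpace ℝ (Fin 2), v ≠ 0 ∧
      ∃ i : Fin n, (1 / (n : ℝ)) * ∑ j, |⟪x j, v⟫| ≤ (2 / 3) * |⟪x i, v⟫| := by
  haveI : NeZero n := ⟨hn.ne'⟩
  have hne : (Finset.univ : Finset (Fin n)).Nonempty := Finset.univ_nonempty
  set g : EuclideanSpace ℝ (Fin 2) → ℝ :=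
    fun v => Finset.univ.sup' hne (fun j => |⟪x j, v⟫|) with hgdef
  have hle : ∀ v j, |⟪x j, v⟫| ≤ g v := fun v j => Finset.le_sup' (fun j => |⟪x j, v⟫|) (Finset.mem_univ j)
  have hex : ∀ v, ∃ i, g v = |⟪x i, v⟫| := by
    intro v
    obtain ⟨i, _, hi⟩ := Finset.exists_mem_eq_sup' hne (fun j => |⟪x j, v⟫|)
    exact ⟨i, hi⟩
  -- continuity of g
  have hgcont : Continuous g := by
    rw [continuous_iff_continuousAt]
    intro v
    show ContinuousAt (fun v => Finset.univ.sup' hne fun j => |⟪x j, v⟫|) v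
    apply ContinuousAt.finset_sup'_apply hne
    intro j _
    exact ((continuous_const.inner continuous_id).abs).continuousAt
  -- g 0 = 0
  have hg0 : g 0 = 0 := by
    show (Finset.univ.sup' hne fun j => |⟪x j, (0:EuclideanSpace ℝ (Fin 2))⟫|) = 0
    simp only [inner_zero_right, abs_zero]
    exact Finset.sup'_const hne 0
  -- homogeneity
  have hgsmul : ∀ (c : ℝ) (v), g (c • v) = |c| * g v := by
    intro c v
    have key : (Finset.univ.sup' hne fun j => |c| * |⟪x j, v⟫|)
        = |c| * Finset.univ.sup' hne fun j => |⟪x j, v⟫| := by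
      rcases eq_or_ne c 0 with rfl | hc
      · simp only [abs_zero, zero_mul]
        exact Finset.sup'_const hne 0
      · exact (Finset.comp_sup'_eq_sup'_comp hne (fun y : ℝ => |c| * y)
          fun a b => mul_max_of_nonneg _ _ (abs_nonneg c)).symm
    have e : (fun j => |⟪x j, c • v⟫|) = fun j => |c| * |⟪x j, v⟫| := by
      funext j; rw [real_inner_smul_right, abs_mul]
    show (Finset.univ.sup' hne fun j => |⟪x j, c • v⟫|)
        = |c| * Finset.univ.sup' hne fun j => |⟪x j, v⟫|
    rw [e, key]
  have hgneg : ∀ v, g (-v) = g v := by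
    intro v
    show (Finset.univ.sup' hne fun j => |⟪x j, -v⟫|) = Finset.univ.sup' hne fun j => |⟪x j, v⟫|
    simp only [inner_neg_right, abs_neg]
  -- positivity
  have hgpos : ∀ v, v ≠ 0 → 0 < g v := by
    intro v hv
    rcases hex v with ⟨i, hi⟩
    rw [hi]
    rcases (abs_nonneg (⟪x i, v⟫)).lt_or_eq with h | h
    · exact h
    · exfalso
      have hall : ∀ j, ⟪x j, v⟫ = 0 := by
        intro j
        have := hle v j
        rw [hi, ← h] at this
        exact abs_eq_zero.mp (le_antisymm this (abs_nonneg _))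
      have hmem : ∀ u ∈ Submodule.span ℝ (Set.range x), ⟪u, v⟫ = 0 := by
        intro u hu
        induction hu using Submodule.span_induction with
        | mem u hu => obtain ⟨j, rfl⟩ := hu; exact hall j
        | zero => simp
        | add u w _ _ hu hw => rw [inner_add_left, hu, hw, add_zero]
        | smul c u _ hu => rw [real_inner_smul_left, hu, mul_zero]
      have hvv : ⟪v, v⟫ = 0 := hmem v (hspan ▸ Submodule.mem_top)
      exact hv (inner_self_eq_zero.mp hvv)
  -- the path
  set e0 : EuclideanSpace ℝ (Fin 2) := EuclideanSpace.single 0 1 with he0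
  set e1 : EuclideanSpace ℝ (Fin 2) := EuclideanSpace.single 1 1 with he1
  have he0ne : e0 ≠ 0 := by
    intro h
    have := congrFun (congrArg (fun w : EuclideanSpace ℝ (Fin 2) => (w : Fin 2 → ℝ)) h) 0
    simp [he0, EuclideanSpace.single_apply] at this
  set p : ℝ → EuclideanSpace ℝ (Fin 2) := fun t => (1 - 2*t) • e0 + (t*(1-t)) • e1 with hp
  have hpne : ∀ t, p t ≠ 0 := by
    intro t h
    have h0 := congrFun (congrArg (fun w : EuclideanSpace ℝ (Fin 2) => (w : Fin 2 → ℝ)) h) 0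
    have h1 := congrFun (congrArg (fun w : EuclideanSpace ℝ (Fin 2) => (w : Fin 2 → ℝ)) h) 1
    simp only [hp, PiLp.add_apply, PiLp.smul_apply, he0, he1, EuclideanSpace.single_apply,
      smul_eq_mul, Pi.zero_apply, PiLp.zero_apply] at h0 h1
    norm_num at h0 h1
    have ht : t = 1/2 := by linarith
    rw [ht] at h1
    rcases h1 with h1 | h1 <;> norm_num at h1
  have hgppos : ∀ t, 0 < g (p t) := fun t => hgpos _ (hpne t)
  set u1 : EuclideanSpace ℝ (Fin 2) := (g e0)⁻¹ • e0 with hu1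
  have hgu1 : g u1 = 1 := by
    rw [hu1, hgsmul, abs_of_pos (inv_pos.mpr (hgpos _ he0ne))]
    exact inv_mul_cancel₀ (hgpos _ he0ne).ne'
  set q : ℝ → EuclideanSpace ℝ (Fin 2) := fun t => (g (p t))⁻¹ • p t with hq
  have hgq : ∀ t, g (q t) = 1 := by
    intro t
    rw [hq, hgsmul, abs_of_pos (inv_pos.mpr (hgppos t))]
    exact inv_mul_cancel₀ (hgppos t).ne'
  set h : ℝ → ℝ := fun t => g (u1 + q t) with hh
  have hpcont : Continuous p := by
    show Continuous fun t : ℝ => (1 - 2*t) • e0 + (t*(1-t)) • e1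
    fun_prop
  have hqcont : Continuous q := by
    show Continuous fun t => (g (p t))⁻¹ • p t
    exact ((hgcont.comp hpcont).inv₀ fun t => (hgppos t).ne').smul hpcont
  have hhcont : Continuous h := by
    show Continuous fun t => g (u1 + q t)
    exact hgcont.comp (continuous_const.add hqcont)
  have hp0 : p 0 = e0 := by
    show (1 - 2*(0:ℝ)) • e0 + ((0:ℝ)*(1-0)) • e1 = e0
    norm_num
  have hp1 : p 1 = -e0 := by
    show (1 - 2*(1:ℝ)) • e0 + ((1:ℝ)*(1-1)) • e1 = -e0
    norm_num
  have hq0 : q 0 = u1 := by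
    show (g (p 0))⁻¹ • p 0 = u1
    rw [hp0]
  have hq1 : q 1 = -u1 := by
    show (g (p 1))⁻¹ • p 1 = -u1
    rw [hp1, hgneg, smul_neg]
  have hh0 : h 0 = 2 := by
    show g (u1 + q 0) = 2
    rw [hq0, show u1 + u1 = (2:ℝ) • u1 from (two_smul ℝ u1).symm, hgsmul, hgu1]
    norm_num
  have hh1 : h 1 = 0 := by
    show g (u1 + q 1) = 0
    rw [hq1, add_neg_cancel, hg0]
  -- IVT
  have hmem : (1:ℝ) ∈ Set.Icc (h 1) (h 0) := by rw [hh0, hh1]; norm_num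
  obtain ⟨t, ht, hht⟩ := intermediate_value_Icc' (by norm_num : (0:ℝ) ≤ 1)
    (hhcont.continuousOn) hmem
  -- the three directions
  set v1 : EuclideanSpace ℝ (Fin 2) := u1
  set v2 : EuclideanSpace ℝ (Fin 2) := q t with hv2
  set v3 : EuclideanSpace ℝ (Fin 2) := -(u1 + q t) with hv3
  have hgv1 : g v1 = 1 := hgu1
  have hgv2 : g v2 = 1 := hgq t
  have hgv3 : g v3 = 1 := by rw [hv3, hgneg]; exact hht
  -- pointwise bound
  have hkey : ∀ j, |⟪x j, v1⟫| + |⟪x j, v2⟫| + |⟪x j, v3⟫| ≤ 2 := by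
    intro j
    have h1 : |⟪x j, v1⟫| ≤ 1 := hgv1 ▸ hle v1 j
    have h2 : |⟪x j, v2⟫| ≤ 1 := hgv2 ▸ hle v2 j
    have h3 : |⟪x j, v3⟫| ≤ 1 := hgv3 ▸ hle v3 j
    have h3e : ⟪x j, v3⟫ = -(⟪x j, v1⟫ + ⟪x j, v2⟫) := by
      rw [hv3, inner_neg_right, inner_add_right]
    rw [h3e, abs_neg] at h3 ⊢
    rcases abs_cases (⟪x j, v1⟫) with ⟨ha, ha'⟩ | ⟨ha, ha'⟩ <;>
      rcases abs_cases (⟪x j, v2⟫) with ⟨hb, hb'⟩ | ⟨hb, hb'⟩ <;>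
      rcases abs_cases (⟪x j, v1⟫ + ⟪x j, v2⟫) with ⟨hc, hc'⟩ | ⟨hc, hc'⟩ <;>
      linarith
  have hsum : (∑ j, |⟪x j, v1⟫|) + (∑ j, |⟪x j, v2⟫|) + (∑ j, |⟪x j, v3⟫|) ≤ 2 * n := by
    rw [← Finset.sum_add_distrib, ← Finset.sum_add_distrib]
    calc ∑ j, (|⟪x j, v1⟫| + |⟪x j, v2⟫| + |⟪x j, v3⟫|) ≤ ∑ _j : Fin n, (2:ℝ) :=
          Finset.sum_le_sum fun j _ => hkey j
      _ = 2 * n := by simp [mul_comm]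
  -- one of the three sums is small
  have hmin : (∑ j, |⟪x j, v1⟫|) ≤ 2 * n / 3 ∨ (∑ j, |⟪x j, v2⟫|) ≤ 2 * n / 3 ∨
      (∑ j, |⟪x j, v3⟫|) ≤ 2 * n / 3 := by
    by_contra hc
    push_neg at hc
    obtain ⟨c1, c2, c3⟩ := hc
    linarith
  have hnpos : (0:ℝ) < n := Nat.cast_pos.mpr hn
  have final : ∀ v : EuclideanSpace ℝ (Fin 2), g v = 1 → (∑ j, |⟪x j, v⟫|) ≤ 2 * n / 3 →
      ∃ w : EuclideanSpace ℝ (Fin 2), w ≠ 0 ∧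
      ∃ i : Fin n, (1 / (n : ℝ)) * ∑ j, |⟪x j, w⟫| ≤ (2 / 3) * |⟪x i, w⟫| := by
    intro v hgv hsv
    refine ⟨v, ?_, ?_⟩
    · intro hv0; rw [hv0, hg0] at hgv; norm_num at hgv
    · obtain ⟨i, hi⟩ := hex v
      refine ⟨i, ?_⟩
      rw [← hi, hgv, mul_one]
      rw [div_mul_eq_mul_div, one_mul, div_le_iff₀ hnpos]
      calc (∑ j, |⟪x j, v⟫|) ≤ 2 * n / 3 := hsv
        _ = 2 / 3 * n := by ring
  rcases hmin with hm | hm | hm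
  · exact final v1 hgv1 hm
  · exact final v2 hgv2 hm
  · exact final v3 hgv3 hm
end

section
/- Let q be a prime power with q ≡ 3 (mod 4). Then there exists a real Hadamard matrix of order q+1, i.e., a matrix H ∈ {±1}^{(q+1)×(q+1)} with H^T H = (q+1)·I_{q+1}. -/
open Matrix Finset

section aux
variable {F : Type*} [Field F] [Fintype F] [DecidableEq F]

lemma key_shift (hF : ringChar F ≠ 2) (d : F) (hd : d ≠ 0) :
    ∑ x : F, quadraticChar F x * quadraticChar F (x + d) = -1 := by
  have h0 : ∑ x : F, quadraticChar F x * quadraticChar F (x + d)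
      = ∑ x ∈ Finset.univ.erase (0 : F), quadraticChar F x * quadraticChar F (x + d) := by
    rw [← Finset.add_sum_erase _ _ (Finset.mem_univ (0 : F))]
    simp
  rw [h0]
  have h1 : ∀ x ∈ Finset.univ.erase (0 : F),
      quadraticChar F x * quadraticChar F (x + d) = quadraticChar F (1 + d * x⁻¹) := by
    intro x hx
    have hx0 : x ≠ 0 := Finset.ne_of_mem_erase hx
    have : x * (x + d) = x ^ 2 * (1 + d * x⁻¹) := by field_simp
    rw [← _root_.map_mul, this, _root_.map_mul, quadraticChar_sq_one' hx0, one_mul]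
  rw [Finset.sum_congr rfl h1]
  have h2 : ∑ x ∈ Finset.univ.erase (0 : F), quadraticChar F (1 + d * x⁻¹)
      = ∑ y ∈ Finset.univ.erase (1 : F), quadraticChar F y := by
    apply Finset.sum_nbij' (fun x => 1 + d * x⁻¹) (fun y => d * (y - 1)⁻¹)
    · intro x hx
      have hx0 : x ≠ 0 := Finset.ne_of_mem_erase hx
      simp only [Finset.mem_erase, Finset.mem_univ, and_true]
      intro h
      have : d * x⁻¹ = 0 := by linear_combination h
      rcases mul_eq_zero.1 this with h' | h'
      · exact hd h'
      · exact hx0 (inv_eq_zero.1 h')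
    · intro y hy
      have hy1 : y ≠ 1 := Finset.ne_of_mem_erase hy
      simp only [Finset.mem_erase, Finset.mem_univ, and_true]
      exact mul_ne_zero hd (inv_ne_zero (sub_ne_zero.2 hy1))
    · intro x hx
      have hx0 : x ≠ 0 := Finset.ne_of_mem_erase hx
      field_simp
      simp [hd]
    · intro y hy
      have hy1 : y ≠ 1 := Finset.ne_of_mem_erase hy
      have : y - 1 ≠ 0 := sub_ne_zero.2 hy1
      field_simp
      ring
    · intro x hx; rfl
  rw [h2, Finset.sum_erase_eq_sub (Finset.mem_univ (1 : F)), quadraticChar_sum_zero hF,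
    _root_.map_one, zero_sub]

lemma sum_sq (hF : ringChar F ≠ 2) :
    ∑ x : F, quadraticChar F x * quadraticChar F x = (Fintype.card F : ℤ) - 1 := by
  have h1 : ∀ x ∈ Finset.univ.erase (0 : F),
      quadraticChar F x * quadraticChar F x = 1 := by
    intro x hx
    have hx0 : x ≠ 0 := Finset.ne_of_mem_erase hx
    rw [← sq, quadraticChar_sq_one hx0]
  rw [← Finset.add_sum_erase _ _ (Finset.mem_univ (0 : F)), Finset.sum_congr rfl h1]
  simp [Finset.card_erase_of_mem, Finset.card_univ]
  have := Fintype.card_pos (α := F)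
  omega

end aux

section paley
variable (F : Type*) [Field F] [Fintype F] [DecidableEq F]

def payC : Matrix (Option F) (Option F) ℝ :=
  fun i j => match i, j with
  | none, none => 0
  | none, some _ => 1
  | some _, none => -1
  | some a, some b => ((quadraticChar F (a - b) : ℤ) : ℝ)

variable {F}

@[simp] lemma payC_nn : payC F none none = 0 := rfl
@[simp] lemma payC_ns (b : F) : payC F none (some b) = 1 := rfl
@[simp] lemma payC_sn (a : F) : payC F (some a) none = -1 := rfl
@[simp] lemma payC_ss (a b : F) :
    payC F (some a) (some b) = ((quadraticChar F (a - b) : ℤ) : ℝ) := rfl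

lemma payC_transpose (h4 : Fintype.card F % 4 = 3) (hF : ringChar F ≠ 2) :
    (payC F)ᵀ = - payC F := by
  have hneg : quadraticChar F (-1) = -1 := by
    rw [quadraticChar_neg_one hF, ZMod.χ₄_nat_three_mod_four h4]
  ext i j
  rcases i with _ | a <;> rcases j with _ | b
  · simp
  · simp
  · simp
  · simp only [Matrix.transpose_apply, Matrix.neg_apply, payC_ss]
    have h : b - a = (-1) * (a - b) := by ring
    rw [h, _root_.map_mul, hneg]
    push_cast
    ring

lemma payC_mul (h4 : Fintype.card F % 4 = 3) (hF : ringChar F ≠ 2) :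
    (payC F)ᵀ * payC F = (Fintype.card F : ℝ) • 1 := by
  ext i j
  rw [Matrix.mul_apply]
  simp only [Matrix.transpose_apply, Matrix.smul_apply, smul_eq_mul]
  rcases i with _ | a <;> rcases j with _ | b
  · rw [Fintype.sum_option]
    simp [Matrix.one_apply_eq, Finset.card_univ]
  · rw [Fintype.sum_option]
    have h1 : ∑ c : F, payC F (some c) none * payC F (some c) (some b)
        = ((-∑ c : F, quadraticChar F (c - b) : ℤ) : ℝ) := by
      push_cast [← Finset.sum_neg_distrib]
      refine Finset.sum_congr rfl fun c _ => ?_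
      simp
    have h2 : (∑ c : F, quadraticChar F (c - b) : ℤ) = 0 := by
      exact (Fintype.sum_equiv (Equiv.subRight b) _ _ fun c => rfl).trans
        (quadraticChar_sum_zero hF)
    rw [h1, h2, Matrix.one_apply_ne (by simp : (none : Option F) ≠ some b)]
    norm_num
  · rw [Fintype.sum_option]
    have h1 : ∑ c : F, payC F (some c) (some a) * payC F (some c) none
        = ((-∑ c : F, quadraticChar F (c - a) : ℤ) : ℝ) := by
      push_cast [← Finset.sum_neg_distrib]
      refine Finset.sum_congr rfl fun c _ => ?_
      simp
    have h2 : (∑ c : F, quadraticChar F (c - a) : ℤ) = 0 := by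
      exact (Fintype.sum_equiv (Equiv.subRight a) _ _ fun c => rfl).trans
        (quadraticChar_sum_zero hF)
    rw [h1, h2, Matrix.one_apply_ne (by simp : (some a : Option F) ≠ none)]
    norm_num
  · rw [Fintype.sum_option]
    have h1 : ∑ c : F, payC F (some c) (some a) * payC F (some c) (some b)
        = ((∑ c : F, quadraticChar F (c - a) * quadraticChar F (c - b) : ℤ) : ℝ) := by
      push_cast
      rfl
    have h2 : (∑ c : F, quadraticChar F (c - a) * quadraticChar F (c - b) : ℤ)
        = ∑ x : F, quadraticChar F x * quadraticChar F (x + (a - b)) := by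
      refine Fintype.sum_equiv (Equiv.subRight a) _ _ fun c => ?_
      simp only [Equiv.subRight_apply]
      congr 1
      ring_nf
    rw [h1, h2]
    by_cases hab : a = b
    · subst hab
      have h3 : ∑ x : F, quadraticChar F x * quadraticChar F (x + (a - a))
          = (Fintype.card F : ℤ) - 1 := by
        simpa using sum_sq (F := F) hF
      rw [h3, Matrix.one_apply_eq]
      simp only [payC_ns]
      push_cast
      ring
    · have h3 : ∑ x : F, quadraticChar F x * quadraticChar F (x + (a - b)) = -1 :=
        key_shift hF (a - b) (sub_ne_zero.2 hab)
      rw [h3, Matrix.one_apply_ne (by simpa using hab : (some a : Option F) ≠ some b)]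
      simp only [payC_ns]
      norm_num

end paley

theorem stmt_17 (q : ℕ) (hq : IsPrimePow q) (hmod : q % 4 = 3) :
    ∃ H : Matrix (Fin (q + 1)) (Fin (q + 1)) ℝ,
      (∀ i j, H i j = 1 ∨ H i j = -1) ∧
      Hᵀ * H = ((q : ℝ) + 1) • (1 : Matrix (Fin (q + 1)) (Fin (q + 1)) ℝ) := by
  obtain ⟨p, n, hp, hn, rfl⟩ := hq
  haveI : Fact p.Prime := ⟨hp.nat_prime⟩
  letI : DecidableEq (GaloisField p n) := Classical.decEq _
  letI : Fintype (GaloisField p n) := Fintype.ofFinite _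
  have hcard : Fintype.card (GaloisField p n) = p ^ n := by
    rw [← Nat.card_eq_fintype_card]
    exact GaloisField.card p n hn.ne'
  have h4 : Fintype.card (GaloisField p n) % 4 = 3 := by rw [hcard]; exact hmod
  have hF : ringChar (GaloisField p n) ≠ 2 := by
    have hrc : ringChar (GaloisField p n) = p := ringChar.eq _ p
    rw [hrc]
    rintro rfl
    have h2 : (2 ^ n) % 2 = 1 := by omega
    rw [Nat.pow_mod] at h2
    have hn' : n ≠ 0 := hn.ne'
    simp [hn'] at h2
  have hent : ∀ i j, (1 + payC (GaloisField p n)) i j = 1 ∨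
      (1 + payC (GaloisField p n)) i j = -1 := by
    intro i j
    rcases i with _ | a <;> rcases j with _ | b
    · left; simp [Matrix.add_apply, Matrix.one_apply_eq]
    · left
      simp [Matrix.add_apply,
        Matrix.one_apply_ne (by simp : (none : Option (GaloisField p n)) ≠ some b)]
    · right
      simp [Matrix.add_apply,
        Matrix.one_apply_ne (by simp : (some a : Option (GaloisField p n)) ≠ none)]
    · by_cases hab : a = b
      · subst hab
        left
        simp [Matrix.add_apply, Matrix.one_apply_eq, quadraticChar_zero]
      · have hne : (some a : Option (GaloisField p n)) ≠ some b := by simpa using hab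
        have hd : a - b ≠ 0 := sub_ne_zero.2 hab
        rcases quadraticChar_dichotomy hd with h | h
        · left
          simp [Matrix.add_apply, Matrix.one_apply_ne hne, h]
        · right
          simp [Matrix.add_apply, Matrix.one_apply_ne hne, h]
  have hCt := payC_transpose h4 hF
  have hCm := payC_mul h4 hF
  have hmulH : (1 + payC (GaloisField p n))ᵀ * (1 + payC (GaloisField p n))
      = (((p ^ n : ℕ) : ℝ) + 1) • 1 := by
    have e1 : (1 + payC (GaloisField p n))ᵀ * (1 + payC (GaloisField p n))
        = 1 + payC (GaloisField p n) + (payC (GaloisField p n))ᵀ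
          + (payC (GaloisField p n))ᵀ * payC (GaloisField p n) := by
      rw [Matrix.transpose_add, Matrix.transpose_one, add_mul, mul_add, mul_add]
      simp only [one_mul, mul_one]
      abel
    rw [e1, hCm, hCt, hcard, add_smul, one_smul]
    abel
  have hce : Fintype.card (Option (GaloisField p n)) = p ^ n + 1 := by
    rw [Fintype.card_option, hcard]
  let e : Option (GaloisField p n) ≃ Fin (p ^ n + 1) := Fintype.equivFinOfCardEq hce
  refine ⟨(1 + payC (GaloisField p n)).submatrix e.symm e.symm, fun i j => hent _ _, ?_⟩
  rw [Matrix.transpose_submatrix, Matrix.submatrix_mul_equiv, hmulH]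
  show (((p ^ n : ℕ) : ℝ) + 1) •
      (1 : Matrix (Option (GaloisField p n)) (Option (GaloisField p n)) ℝ).submatrix
        ⇑e.symm ⇑e.symm = _
  rw [Matrix.submatrix_one_equiv e.symm]
end
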